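/- arXiv:1205.6718 — 7 statements merged into one kernel-verified Lean document; each statement's English description precedes it below -/
import Mathlib

section
/- For any integer n > 2, the number of triples (x, y, z) in [1,n]^3 such that x < y < z and gcd(y−x, z−y, n) = 1 equals (n/6)·J₂(n) − (n/2)·J₁(n), where J_k is Jordan's totient function. -/
open Finset ArithmeticFunction
open scoped ArithmeticFunction.Moebius

/-- Jordan's totient function of order `k`. -/
def jordanTotient (k n : ℕ) : ℚ :=
  (n : ℚ) ^ k * ∏ p ∈ n.primeFactors, (1 - 1 / (p : ℚ) ^ k)

/- ### Elementary counting lemmas -/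

lemma aux_sum_range_choose2 (m : ℕ) : ∑ j ∈ range m, j.choose 2 = m.choose 3 := by
  induction m with
  | zero => simp
  | succ k ih =>
    rw [Finset.sum_range_succ, ih,
      show (k+1).choose 3 = k.choose 2 + k.choose 3 from Nat.choose_succ_succ k 2]
    omega

lemma aux_sum_Icc_sub (k m : ℕ) (h : k ≤ m) :
    ∑ b ∈ Icc 1 m, (k - b) = k.choose 2 := by
  have h1 : ∑ b ∈ Icc 1 k, (k - b) = ∑ b ∈ Icc 1 m, (k - b) := by
    apply Finset.sum_subset (Finset.Icc_subset_Icc_right h)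
    intro x hx hnx
    simp only [mem_Icc] at hx hnx
    omega
  rw [← h1]
  clear h1 h
  induction k with
  | zero => simp
  | succ j ih =>
    rw [Finset.sum_Icc_succ_top (by omega)]
    have h2 : ∀ b ∈ Icc 1 j, (j + 1 - b) = (j - b) + 1 := by
      intro b hb; simp only [mem_Icc] at hb; omega
    rw [Finset.sum_congr rfl h2, Finset.sum_add_distrib, ih, Finset.sum_const,
      Nat.card_Icc, show (j+1).choose 2 = j.choose 1 + j.choose 2 from Nat.choose_succ_succ j 1,
      Nat.choose_one_right]
    simp; omega

lemma aux_double_sum (m : ℕ) :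
    ∑ a ∈ Icc 1 m, ∑ b ∈ Icc 1 m, (m - a - b) = m.choose 3 := by
  have h1 : ∀ a ∈ Icc 1 m, ∑ b ∈ Icc 1 m, (m - a - b) = (m - a).choose 2 := by
    intro a _; exact aux_sum_Icc_sub (m - a) m (by omega)
  rw [Finset.sum_congr rfl h1, ← aux_sum_range_choose2 m]
  apply Finset.sum_nbij' (i := fun a => m - a) (j := fun j => m - j)
  · intro a ha; simp only [mem_Icc] at ha; simp only [mem_range]; omega
  · intro a ha; simp only [mem_range] at ha; simp only [mem_Icc]; omega
  · intro a ha; simp only [mem_Icc] at ha; omega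
  · intro a ha; simp only [mem_range] at ha; omega
  · intro a _; rfl

lemma aux_c2 (m : ℕ) : (m+2).choose 2 * 2 = (m+2) * (m+1) := by
  induction m with
  | zero => rfl
  | succ l ih =>
    rw [show l+1+2 = (l+2)+1 by omega,
      show ((l+2)+1).choose 2 = (l+2).choose 1 + (l+2).choose 2 from Nat.choose_succ_succ _ 1,
      Nat.add_mul, ih, Nat.choose_one_right]
    ring

lemma aux_c3 (m : ℕ) : (m+3).choose 3 * 6 = (m+3) * (m+2) * (m+1) := by
  induction m with
  | zero => rfl
  | succ l ih =>
    have hc : (l+3).choose 2 * 2 = (l+3)*(l+2) := by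
      simpa [show l+1+2 = l+3 by omega, show l+1+1 = l+2 by omega] using aux_c2 (l+1)
    rw [show l+1+3 = (l+3)+1 by omega,
      show ((l+3)+1).choose 3 = (l+3).choose 2 + (l+3).choose 3 from Nat.choose_succ_succ _ 2,
      Nat.add_mul, ih]
    nlinarith [hc]

lemma aux_choose3_cast (m : ℕ) :
    (m.choose 3 : ℚ) = ((m:ℚ)^3 - 3*(m:ℚ)^2 + 2*(m:ℚ))/6 := by
  match m with
  | 0 => norm_num
  | 1 =>
    rw [Nat.choose_eq_zero_of_lt (by norm_num)]
    norm_num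
  | 2 =>
    rw [Nat.choose_eq_zero_of_lt (by norm_num)]
    norm_num
  | (j+3) =>
    have h := aux_c3 j
    have hq : ((j+3).choose 3 : ℚ) * 6 = ((j:ℚ)+3)*((j:ℚ)+2)*((j:ℚ)+1) := by
      exact_mod_cast congrArg (fun x : ℕ => (x : ℚ)) h
    push_cast
    push_cast at hq
    linear_combination hq / 6

/- ### Möbius sums -/

lemma aux_sum_moebius (m : ℕ) :
    ∑ d ∈ m.divisors, (μ d : ℚ) = if m = 1 then 1 else 0 := by
  have h := congrArg (fun f : ArithmeticFunction ℤ => f m) moebius_mul_coe_zeta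
  simp only [coe_mul_zeta_apply, one_apply] at h
  calc ∑ d ∈ m.divisors, (μ d : ℚ) = ((∑ d ∈ m.divisors, μ d : ℤ) : ℚ) := by norm_cast
    _ = _ := by rw [h]; split <;> norm_num

lemma aux_squarefree_prod (s : Finset ℕ) (hs : ∀ p ∈ s, p.Prime) :
    Squarefree (∏ p ∈ s, p) := by
  induction s using Finset.induction_on with
  | empty => simpa using squarefree_one
  | @insert p s hp ih =>
    rw [Finset.prod_insert hp]
    have hpp := hs p (mem_insert_self _ _)
    have hcop : Nat.Coprime p (∏ q ∈ s, q) :=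
      Nat.Coprime.prod_right fun q hq =>
        (Nat.coprime_primes hpp (hs q (mem_insert_of_mem hq))).2
          (by rintro rfl; exact hp hq)
    rw [Nat.squarefree_mul hcop]
    exact ⟨hpp.squarefree, ih fun q hq => hs q (mem_insert_of_mem hq)⟩

lemma aux_moebius_prod (f : ArithmeticFunction ℚ) (hf : f.IsMultiplicative)
    {n : ℕ} (hn : n ≠ 0) :
    ∑ d ∈ n.divisors, (μ d : ℚ) * f d = ∏ p ∈ n.primeFactors, (1 - f p) := by
  set r := ∏ p ∈ n.primeFactors, p with hr
  have hprime : ∀ p ∈ n.primeFactors, p.Prime := fun p hp => Nat.prime_of_mem_primeFactors hp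
  have hrs : Squarefree r := aux_squarefree_prod _ hprime
  have hr0 : r ≠ 0 := hrs.ne_zero
  have hpf : r.primeFactors = n.primeFactors := Nat.primeFactors_prod hprime
  have hdvd : ∀ d : ℕ, d ∣ r ↔ d ∣ n ∧ Squarefree d := by
    intro d
    constructor
    · intro hd
      exact ⟨hd.trans (Nat.prod_primeFactors_dvd n), hrs.squarefree_of_dvd hd⟩
    · rintro ⟨hdn, hds⟩
      rw [← Nat.prod_primeFactors_of_squarefree hds]
      exact Finset.prod_dvd_prod_of_subset _ _ _ (Nat.primeFactors_mono hdn hn)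
  have hdiv : r.divisors = n.divisors.filter Squarefree := by
    ext d
    simp only [Nat.mem_divisors, mem_filter, hdvd d]
    constructor
    · rintro ⟨⟨h1, h2⟩, -⟩; exact ⟨⟨h1, hn⟩, h2⟩
    · rintro ⟨⟨h1, -⟩, h2⟩; exact ⟨⟨h1, h2⟩, hr0⟩
  rw [← hpf, (IsMultiplicative.prodPrimeFactors_one_sub_of_squarefree f hf hrs), hdiv,
    Finset.sum_filter_of_ne]
  intro d _ hne
  by_contra hsq
  rw [moebius_eq_zero_of_not_squarefree hsq] at hne
  simp at hne

lemma aux_jordan_eq_sum (k n : ℕ) (hk : k ≠ 0) (hn : n ≠ 0) :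
    jordanTotient k n = ∑ d ∈ n.divisors, (μ d : ℚ) * ((n / d : ℕ) : ℚ) ^ k := by
  set f : ArithmeticFunction ℚ := ⟨fun d => (1 / (d : ℚ)) ^ k, by
    simp [zero_pow hk]⟩ with hfdef
  have hfap : ∀ d : ℕ, f d = (1 / (d : ℚ)) ^ k := fun d => rfl
  have hf : f.IsMultiplicative := by
    constructor
    · rw [hfap]; norm_num
    · intro m l _
      rw [hfap, hfap, hfap, Nat.cast_mul, one_div, one_div, one_div, mul_inv, mul_pow]
  have key := aux_moebius_prod f hf hn
  have h2 : ∏ p ∈ n.primeFactors, (1 - f p) = ∏ p ∈ n.primeFactors, (1 - 1 / (p:ℚ)^k) := by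
    apply Finset.prod_congr rfl
    intro p _
    rw [hfap, div_pow, one_pow]
  rw [jordanTotient, ← h2, ← key, Finset.mul_sum]
  apply Finset.sum_congr rfl
  intro d hd
  rw [Nat.mem_divisors] at hd
  have hd0 : (d : ℚ) ≠ 0 := by
    exact_mod_cast fun h => hn (by simpa [h] using hd.1)
  rw [hfap d, Nat.cast_div hd.1 hd0]
  ring

/- ### Reduce the triple count to a sum over pairs -/

lemma aux_card_eq (n : ℕ) :
    ((Finset.Icc 1 n ×ˢ Finset.Icc 1 n ×ˢ Finset.Icc 1 n).filter
      (fun p => p.1 < p.2.1 ∧ p.2.1 < p.2.2 ∧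
        Nat.gcd (p.2.1 - p.1) (Nat.gcd (p.2.2 - p.2.1) n) = 1)).card
    = ∑ ab ∈ (Finset.Icc 1 n ×ˢ Finset.Icc 1 n).filter
        (fun ab => Nat.gcd ab.1 (Nat.gcd ab.2 n) = 1), (n - ab.1 - ab.2) := by
  have hcard : ((Finset.Icc 1 n ×ˢ Finset.Icc 1 n ×ˢ Finset.Icc 1 n).filter
      (fun p => p.1 < p.2.1 ∧ p.2.1 < p.2.2 ∧
        Nat.gcd (p.2.1 - p.1) (Nat.gcd (p.2.2 - p.2.1) n) = 1)).card
      = (((Finset.Icc 1 n ×ˢ Finset.Icc 1 n).filter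
        (fun ab => Nat.gcd ab.1 (Nat.gcd ab.2 n) = 1)).sigma
        (fun ab => Finset.Icc 1 (n - ab.1 - ab.2))).card := by
    apply Finset.card_nbij' (i := fun p => ⟨(p.2.1 - p.1, p.2.2 - p.2.1), p.1⟩)
      (j := fun q => (q.2, q.2 + q.1.1, q.2 + q.1.1 + q.1.2))
    · rintro ⟨x, y, z⟩ hp
      simp only [Finset.mem_coe, Finset.mem_filter, Finset.mem_product, Finset.mem_Icc] at hp
      obtain ⟨⟨hx, hy, hz⟩, hxy, hyz, hgcd⟩ := hp
      simp only [Finset.mem_coe, Finset.mem_sigma, Finset.mem_filter, Finset.mem_product, Finset.mem_Icc]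
      refine ⟨⟨⟨?_, ?_⟩, hgcd⟩, ?_⟩ <;> omega
    · rintro ⟨⟨a, b⟩, x⟩ hq
      simp only [Finset.mem_coe, Finset.mem_sigma, Finset.mem_filter, Finset.mem_product, Finset.mem_Icc] at hq
      obtain ⟨⟨⟨⟨ha1, ha2⟩, hb1, hb2⟩, hgcd⟩, hx1, hx2⟩ := hq
      simp only [Finset.mem_coe, Finset.mem_filter, Finset.mem_product, Finset.mem_Icc]
      have e1 : x + a - x = a := by omega
      have e2 : x + a + b - (x + a) = b := by omega
      refine ⟨⟨?_, ?_, ?_⟩, ?_, ?_, ?_⟩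
      · omega
      · omega
      · omega
      · omega
      · omega
      · rw [e1, e2]; exact hgcd
    · rintro ⟨x, y, z⟩ hp
      simp only [Finset.mem_coe, Finset.mem_filter, Finset.mem_product, Finset.mem_Icc] at hp
      obtain ⟨⟨hx, hy, hz⟩, hxy, hyz, hgcd⟩ := hp
      simp only [Prod.mk.injEq]
      refine ⟨by trivial, by omega, by omega⟩
    · rintro ⟨⟨a, b⟩, x⟩ hq
      have e1 : x + a - x = a := by omega
      have e2 : x + a + b - (x + a) = b := by omega
      simp only [e1, e2]
  rw [hcard, Finset.card_sigma]
  apply Finset.sum_congr rfl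
  intro ab _
  rw [Nat.card_Icc]
  omega

/- ### The inner sum over multiples of d -/

lemma aux_inner_sum (n d : ℕ) (hd : d ∣ n) (hd0 : d ≠ 0) :
    ∑ ab ∈ (Finset.Icc 1 n ×ˢ Finset.Icc 1 n).filter
        (fun ab => d ∣ ab.1 ∧ d ∣ ab.2), (n - ab.1 - ab.2)
      = d * (n / d).choose 3 := by
  set m := n / d with hm
  have hnm : n = d * m := (Nat.div_mul_cancel hd).symm.trans (mul_comm _ _)
  have h1 : ∑ ab ∈ (Finset.Icc 1 n ×ˢ Finset.Icc 1 n).filter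
        (fun ab => d ∣ ab.1 ∧ d ∣ ab.2), (n - ab.1 - ab.2)
      = ∑ ab ∈ Finset.Icc 1 m ×ˢ Finset.Icc 1 m, d * (m - ab.1 - ab.2) := by
    apply Finset.sum_nbij' (i := fun ab => (ab.1 / d, ab.2 / d))
      (j := fun ab => (d * ab.1, d * ab.2))
    · rintro ⟨a, b⟩ hab
      simp only [Finset.mem_filter, Finset.mem_product, Finset.mem_Icc] at hab
      obtain ⟨⟨⟨ha1, ha2⟩, hb1, hb2⟩, hda, hdb⟩ := hab
      simp only [Finset.mem_product, Finset.mem_Icc]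
      refine ⟨⟨Nat.one_le_div_iff (by omega) |>.2 (Nat.le_of_dvd (by omega) hda),
        Nat.div_le_div_right ha2⟩,
        Nat.one_le_div_iff (by omega) |>.2 (Nat.le_of_dvd (by omega) hdb),
        Nat.div_le_div_right hb2⟩
    · rintro ⟨a, b⟩ hab
      simp only [Finset.mem_product, Finset.mem_Icc] at hab
      obtain ⟨⟨ha1, ha2⟩, hb1, hb2⟩ := hab
      simp only [Finset.mem_filter, Finset.mem_product, Finset.mem_Icc]
      refine ⟨⟨⟨Nat.mul_pos (by omega) (by omega), by rw [hnm]; exact Nat.mul_le_mul_left d ha2⟩,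
        Nat.mul_pos (by omega) (by omega), by rw [hnm]; exact Nat.mul_le_mul_left d hb2⟩,
        Dvd.intro _ rfl, Dvd.intro _ rfl⟩
    · rintro ⟨a, b⟩ hab
      simp only [Finset.mem_filter, Finset.mem_product, Finset.mem_Icc] at hab
      obtain ⟨-, hda, hdb⟩ := hab
      simp only [Prod.mk.injEq]
      exact ⟨Nat.mul_div_cancel' hda, Nat.mul_div_cancel' hdb⟩
    · rintro ⟨a, b⟩ _
      simp only [Prod.mk.injEq]
      constructor <;> exact Nat.mul_div_cancel_left _ (by omega)
    · rintro ⟨a, b⟩ hab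
      simp only [Finset.mem_filter, Finset.mem_product, Finset.mem_Icc] at hab
      obtain ⟨-, hda, hdb⟩ := hab
      obtain ⟨a', rfl⟩ := hda
      obtain ⟨b', rfl⟩ := hdb
      simp only
      rw [Nat.mul_div_cancel_left _ (by omega), Nat.mul_div_cancel_left _ (by omega),
        hnm, Nat.sub_sub, Nat.sub_sub, ← Nat.mul_add, ← Nat.mul_sub]
  rw [h1, ← Finset.mul_sum, Finset.sum_product, aux_double_sum]

/- ### Main theorem -/

/-- For `n > 2`, the number of triples `(x,y,z)` in `[1,n]³` with `x < y < z` and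
`gcd(y−x, z−y, n) = 1` equals `(n/6)·J₂(n) − (n/2)·J₁(n)`. -/
theorem stmt_1 (n : ℕ) (hn : 2 < n) :
    (((Finset.Icc 1 n ×ˢ Finset.Icc 1 n ×ˢ Finset.Icc 1 n).filter
      (fun p => p.1 < p.2.1 ∧ p.2.1 < p.2.2 ∧
        Nat.gcd (p.2.1 - p.1) (Nat.gcd (p.2.2 - p.2.1) n) = 1)).card : ℚ)
      = (n : ℚ) / 6 * jordanTotient 2 n - (n : ℚ) / 2 * jordanTotient 1 n := by
  have hn0 : n ≠ 0 := by omega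
  rw [aux_card_eq n, Nat.cast_sum, Finset.sum_filter]
  have hstep : ∀ ab ∈ Finset.Icc 1 n ×ˢ Finset.Icc 1 n,
      (if Nat.gcd ab.1 (Nat.gcd ab.2 n) = 1 then ((n - ab.1 - ab.2 : ℕ) : ℚ) else 0)
      = ∑ d ∈ n.divisors, (if d ∣ ab.1 ∧ d ∣ ab.2
          then (μ d : ℚ) * ((n - ab.1 - ab.2 : ℕ) : ℚ) else 0) := by
    rintro ⟨a, b⟩ hab
    simp only [Finset.mem_product, Finset.mem_Icc] at hab
    have ha0 : a ≠ 0 := by omega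
    have hfil : n.divisors.filter (fun d => d ∣ a ∧ d ∣ b)
        = (Nat.gcd a (Nat.gcd b n)).divisors := by
      ext d
      simp only [Nat.mem_divisors, mem_filter, Nat.dvd_gcd_iff]
      have hg : Nat.gcd a (Nat.gcd b n) ≠ 0 := fun h => ha0 (Nat.eq_zero_of_gcd_eq_zero_left h)
      tauto
    have hmu := aux_sum_moebius (Nat.gcd a (Nat.gcd b n))
    rw [← hfil, Finset.sum_filter] at hmu
    calc (if Nat.gcd a (Nat.gcd b n) = 1 then ((n - a - b : ℕ) : ℚ) else 0)
        = (∑ d ∈ n.divisors, (if d ∣ a ∧ d ∣ b then (μ d : ℚ) else 0))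
            * ((n - a - b : ℕ) : ℚ) := by
          rw [hmu]; split <;> simp
      _ = _ := by
          rw [Finset.sum_mul]
          apply Finset.sum_congr rfl
          intro d _
          split <;> simp
  rw [Finset.sum_congr rfl hstep, Finset.sum_comm]
  have hswap : ∀ d ∈ n.divisors,
      (∑ ab ∈ Finset.Icc 1 n ×ˢ Finset.Icc 1 n,
        if d ∣ ab.1 ∧ d ∣ ab.2 then (μ d : ℚ) * ((n - ab.1 - ab.2 : ℕ) : ℚ) else 0)
      = (μ d : ℚ) * ((d * (n / d).choose 3 : ℕ) : ℚ) := by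
    intro d hd
    rw [Nat.mem_divisors] at hd
    have hd0 : d ≠ 0 := fun h => hd.2 (by simpa [h] using hd.1)
    calc (∑ ab ∈ Finset.Icc 1 n ×ˢ Finset.Icc 1 n,
        if d ∣ ab.1 ∧ d ∣ ab.2 then (μ d : ℚ) * ((n - ab.1 - ab.2 : ℕ) : ℚ) else 0)
        = (μ d : ℚ) * ((∑ ab ∈ (Finset.Icc 1 n ×ˢ Finset.Icc 1 n).filter
            (fun ab => d ∣ ab.1 ∧ d ∣ ab.2), (n - ab.1 - ab.2) : ℕ) : ℚ) := by
          rw [← Finset.sum_filter, Nat.cast_sum, Finset.mul_sum]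
      _ = _ := by rw [aux_inner_sum n d hd.1 hd0]
  rw [Finset.sum_congr rfl hswap]
  have hterm : ∀ d ∈ n.divisors,
      (μ d : ℚ) * ((d * (n / d).choose 3 : ℕ) : ℚ)
      = (n : ℚ)/6 * ((μ d : ℚ) * ((n/d : ℕ) : ℚ)^2)
        - (n : ℚ)/2 * ((μ d : ℚ) * ((n/d : ℕ) : ℚ)^1)
        + (n : ℚ)/3 * (μ d : ℚ) := by
    intro d hd
    rw [Nat.mem_divisors] at hd
    have hdm : (d : ℚ) * ((n/d : ℕ) : ℚ) = (n : ℚ) := by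
      rw [← Nat.cast_mul, Nat.mul_div_cancel' hd.1]
    rw [Nat.cast_mul, aux_choose3_cast]
    linear_combination ((μ d : ℚ) * (((n/d : ℕ) : ℚ)^2/6 - ((n/d : ℕ) : ℚ)/2 + 1/3)) * hdm
  rw [Finset.sum_congr rfl hterm, Finset.sum_add_distrib, Finset.sum_sub_distrib,
    ← Finset.mul_sum, ← Finset.mul_sum, ← Finset.mul_sum,
    ← aux_jordan_eq_sum 2 n (by norm_num) hn0, ← aux_jordan_eq_sum 1 n (by norm_num) hn0,
    aux_sum_moebius n, if_neg (by omega)]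
  ring
end

section
/- For every positive integer n, ∑_{k=1}^{n−1} σ(k)·σ(n−k) = (5/12)·σ₃(n) + (1/12)·σ(n) − (1/2)·n·σ(n), where σ_m(n) denotes the sum of m-th powers of the divisors of n and σ = σ₁. -/
open Finset

namespace Besge

def Q (n : ℕ) : Finset ((ℕ × ℕ) × ℕ × ℕ) :=
  ((Finset.Icc 1 n ×ˢ Finset.Icc 1 n) ×ˢ Finset.Icc 1 n ×ˢ Finset.Icc 1 n).filter
    fun p => p.1.1 * p.1.2 + p.2.1 * p.2.2 = n

lemma mem_Q {n : ℕ} {p : (ℕ × ℕ) × ℕ × ℕ} :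
    p ∈ Q n ↔ 0 < p.1.1 ∧ 0 < p.1.2 ∧ 0 < p.2.1 ∧ 0 < p.2.2 ∧
      p.1.1 * p.1.2 + p.2.1 * p.2.2 = n := by
  obtain ⟨⟨a, x⟩, b, y⟩ := p
  simp only [Q, mem_filter, mem_product, mem_Icc]
  constructor
  · rintro ⟨⟨⟨⟨ha1, _⟩, _, _⟩, ⟨hb1, _⟩, hy1, _⟩, heq⟩
    exact ⟨ha1, by omega, hb1, hy1, heq⟩
  · rintro ⟨ha, hx, hb, hy, heq⟩
    have hax : a * x ≤ n := heq ▸ Nat.le_add_right _ _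
    have hby : b * y ≤ n := heq ▸ Nat.le_add_left _ _
    have h1 : a ≤ a * x := Nat.le_mul_of_pos_right a hx
    have h2 : x ≤ a * x := Nat.le_mul_of_pos_left x ha
    have h3 : b ≤ b * y := Nat.le_mul_of_pos_right b hy
    have h4 : y ≤ b * y := Nat.le_mul_of_pos_left y hb
    exact ⟨⟨⟨⟨ha, by omega⟩, hx, by omega⟩, ⟨hb, by omega⟩, hy, by omega⟩, heq⟩

/-- Swap symmetry of `Q`. -/
lemma sum_swap_Q (n : ℕ) (c : (ℕ × ℕ) × ℕ × ℕ → Prop) [DecidablePred c]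
    (F : (ℕ × ℕ) × ℕ × ℕ → ℚ) :
    ∑ p ∈ (Q n).filter (fun p => c (p.2, p.1)), F (p.2, p.1)
      = ∑ p ∈ (Q n).filter c, F p := by
  refine Finset.sum_nbij' (fun p => (p.2, p.1)) (fun p => (p.2, p.1)) ?_ ?_ ?_ ?_ ?_
  · intro p hp
    simp only [mem_filter, mem_Q] at hp ⊢
    obtain ⟨⟨ha, hx, hb, hy, heq⟩, hc⟩ := hp
    exact ⟨⟨hb, hy, ha, hx, by omega⟩, hc⟩
  · intro p hp
    simp only [mem_filter, mem_Q] at hp ⊢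
    obtain ⟨⟨ha, hx, hb, hy, heq⟩, hc⟩ := hp
    exact ⟨⟨hb, hy, ha, hx, by omega⟩, hc⟩
  · intro p _; rfl
  · intro p _; rfl
  · intro p _; rfl

/-- The `φ` bijection: `(a,x,b,y) ↦ (a, x-y, a+b, y)` maps region `y < x` onto region `a < b`. -/
lemma sum_phi_Q (n : ℕ) (F : ℕ → ℕ → ℚ) :
    ∑ p ∈ (Q n).filter (fun p => p.2.2 < p.1.2), F p.1.1 (p.1.1 + p.2.1)
      = ∑ p ∈ (Q n).filter (fun p => p.1.1 < p.2.1), F p.1.1 p.2.1 := by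
  refine Finset.sum_nbij'
    (fun p => ((p.1.1, p.1.2 - p.2.2), (p.1.1 + p.2.1, p.2.2)))
    (fun p => ((p.1.1, p.1.2 + p.2.2), (p.2.1 - p.1.1, p.2.2))) ?_ ?_ ?_ ?_ ?_
  · rintro ⟨⟨a, x⟩, b, y⟩ hp
    simp only [mem_filter, mem_Q] at hp ⊢
    obtain ⟨⟨ha, hx, hb, hy, heq⟩, hlt⟩ := hp
    refine ⟨⟨ha, by omega, by omega, hy, ?_⟩, by omega⟩
    have hc : (x - y) + y = x := Nat.sub_add_cancel hlt.le
    have : a * (x - y) + (a + b) * y = a * ((x - y) + y) + b * y := by ring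
    rw [this, hc, heq]
  · rintro ⟨⟨a, x⟩, b, y⟩ hp
    simp only [mem_filter, mem_Q] at hp ⊢
    obtain ⟨⟨ha, hx, hb, hy, heq⟩, hlt⟩ := hp
    refine ⟨⟨ha, by omega, by omega, hy, ?_⟩, by omega⟩
    have hc : a + (b - a) = b := by omega
    have : a * (x + y) + (b - a) * y = a * x + (a + (b - a)) * y := by ring
    rw [this, hc, heq]
  · rintro ⟨⟨a, x⟩, b, y⟩ hp
    simp only [mem_filter, mem_Q] at hp
    obtain ⟨⟨ha, hx, hb, hy, heq⟩, hlt⟩ := hp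
    simp only [Prod.mk.injEq, true_and, and_true]
    omega
  · rintro ⟨⟨a, x⟩, b, y⟩ hp
    simp only [mem_filter, mem_Q] at hp
    obtain ⟨⟨ha, hx, hb, hy, heq⟩, hlt⟩ := hp
    simp only [Prod.mk.injEq, true_and, and_true]
    omega
  · intro p _; rfl

/-- Trichotomy split of a sum. -/
lemma tri {α : Type*} [DecidableEq α] (s : Finset α) (f g : α → ℕ) (F : α → ℚ) :
    ∑ p ∈ s, F p
      = ∑ p ∈ s.filter (fun p => f p < g p), F p
        + ∑ p ∈ s.filter (fun p => f p = g p), F p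
        + ∑ p ∈ s.filter (fun p => g p < f p), F p := by
  rw [← sum_filter_add_sum_filter_not s (fun p => f p < g p) F]
  have h2 : ∑ p ∈ s.filter (fun p => ¬ f p < g p), F p
      = ∑ p ∈ (s.filter (fun p => ¬ f p < g p)).filter (fun p => f p = g p), F p
        + ∑ p ∈ (s.filter (fun p => ¬ f p < g p)).filter (fun p => ¬ f p = g p), F p :=
    (sum_filter_add_sum_filter_not _ _ _).symm
  rw [h2, filter_filter, filter_filter]
  have e1 : s.filter (fun p => ¬ f p < g p ∧ f p = g p) = s.filter (fun p => f p = g p) :=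
    filter_congr (fun p _ => by omega)
  have e2 : s.filter (fun p => ¬ f p < g p ∧ ¬ f p = g p) = s.filter (fun p => g p < f p) :=
    filter_congr (fun p _ => by omega)
  rw [e1, e2, add_assoc]



/-- Convolution of divisor sums as a sum over `Q n`. -/
lemma conv_Q (n : ℕ) (f g : ℕ → ℚ) :
    ∑ k ∈ Finset.Ico 1 n, (∑ d ∈ k.divisors, f d) * (∑ e ∈ (n - k).divisors, g e)
      = ∑ p ∈ Q n, f p.1.1 * g p.2.1 := by
  have step : ∀ k ∈ Finset.Ico 1 n,
      (∑ d ∈ k.divisors, f d) * (∑ e ∈ (n - k).divisors, g e)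
        = ∑ q ∈ k.divisorsAntidiagonal ×ˢ (n - k).divisorsAntidiagonal, f q.1.1 * g q.2.1 := by
    intro k _
    rw [Finset.sum_product]
    have h1 : (∑ d ∈ k.divisors, f d) = ∑ i ∈ k.divisorsAntidiagonal, f i.1 :=
      (Nat.sum_divisorsAntidiagonal (fun a _ => f a)).symm
    have h2 : (∑ e ∈ (n - k).divisors, g e) = ∑ i ∈ (n - k).divisorsAntidiagonal, g i.1 :=
      (Nat.sum_divisorsAntidiagonal (fun a _ => g a)).symm
    rw [h1, h2, Finset.sum_mul_sum]
  rw [Finset.sum_congr rfl step,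
    Finset.sum_sigma' (Finset.Ico 1 n)
      (fun k => k.divisorsAntidiagonal ×ˢ (n - k).divisorsAntidiagonal)
      (fun _ q => f q.1.1 * g q.2.1)]
  refine Finset.sum_nbij' (fun t => t.2) (fun p => ⟨p.1.1 * p.1.2, p⟩) ?_ ?_ ?_ ?_ ?_
  · rintro ⟨k, ⟨⟨a, x⟩, b, y⟩⟩ ht
    simp only [Finset.mem_sigma, Finset.mem_product, Nat.mem_divisorsAntidiagonal,
      Finset.mem_Ico] at ht
    obtain ⟨⟨hk1, hk2⟩, ⟨hax, hk0⟩, hby, hnk0⟩ := ht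
    simp only [mem_Q]
    have h1 : a ≠ 0 ∧ x ≠ 0 := Nat.mul_ne_zero_iff.mp (by rw [hax]; omega)
    have h2 : b ≠ 0 ∧ y ≠ 0 := Nat.mul_ne_zero_iff.mp (by rw [hby]; omega)
    refine ⟨by omega, by omega, by omega, by omega, by rw [hax, hby]; omega⟩
  · rintro ⟨⟨a, x⟩, b, y⟩ hp
    simp only [mem_Q] at hp
    obtain ⟨ha, hx, hb, hy, heq⟩ := hp
    simp only [Finset.mem_sigma, Finset.mem_product, Nat.mem_divisorsAntidiagonal,
      Finset.mem_Ico]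
    have hax : 0 < a * x := Nat.mul_pos ha hx
    have hby : 0 < b * y := Nat.mul_pos hb hy
    refine ⟨⟨by omega, by omega⟩, ⟨by trivial, by omega⟩, by omega, by omega⟩
  · rintro ⟨k, ⟨⟨a, x⟩, b, y⟩⟩ ht
    simp only [Finset.mem_sigma, Finset.mem_product, Nat.mem_divisorsAntidiagonal,
      Finset.mem_Ico] at ht
    obtain ⟨⟨hk1, hk2⟩, ⟨hax, hk0⟩, hby, hnk0⟩ := ht
    subst hax
    rfl
  · intro p _; rfl
  · intro p _; rfl

/-- Evaluate the diagonal `x = y`. -/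
lemma diagX_Q (n : ℕ) (hn : 0 < n) (F : ℕ → ℕ → ℚ) :
    ∑ p ∈ (Q n).filter (fun p => p.1.2 = p.2.2), F p.1.1 p.2.1
      = ∑ t ∈ n.divisors.sigma (fun d => Finset.Ico 1 (n / d)), F t.2 (n / t.1 - t.2) := by
  refine Finset.sum_nbij' (fun p => ⟨p.1.2, p.1.1⟩)
    (fun t => ((t.2, t.1), (n / t.1 - t.2, t.1))) ?_ ?_ ?_ ?_ ?_
  · rintro ⟨⟨a, x⟩, b, y⟩ hp
    simp only [mem_filter, mem_Q] at hp
    obtain ⟨⟨ha, hx, hb, hy, heq⟩, hd⟩ := hp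
    subst hd
    have hsum : (a + b) * x = n := by rw [add_mul]; omega
    simp only [Finset.mem_sigma, Nat.mem_divisors, Finset.mem_Ico]
    have hdvd : x ∣ n := Dvd.intro_left (a + b) hsum
    have hdiv : n / x = a + b := by rw [← hsum]; exact Nat.mul_div_cancel _ hx
    exact ⟨⟨hdvd, by omega⟩, by omega, by omega⟩
  · rintro ⟨d, c⟩ ht
    simp only [Finset.mem_sigma, Nat.mem_divisors, Finset.mem_Ico] at ht
    obtain ⟨⟨hdvd, hn0⟩, hc1, hc2⟩ := ht
    have hd : 0 < d := Nat.pos_of_dvd_of_pos hdvd hn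
    simp only [mem_filter, mem_Q]
    refine ⟨⟨by omega, by omega, by omega, by omega, ?_⟩, by trivial⟩
    have : c * d + (n / d - c) * d = (c + (n / d - c)) * d := by ring
    rw [this]
    have h2 : c + (n / d - c) = n / d := by omega
    rw [h2]
    exact Nat.div_mul_cancel hdvd
  · rintro ⟨⟨a, x⟩, b, y⟩ hp
    simp only [mem_filter, mem_Q] at hp
    obtain ⟨⟨ha, hx, hb, hy, heq⟩, hd⟩ := hp
    subst hd
    have hsum : (a + b) * x = n := by rw [add_mul]; omega
    have hdiv : n / x = a + b := by rw [← hsum]; exact Nat.mul_div_cancel _ hx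
    simp only [Prod.mk.injEq, true_and, and_true]
    omega
  · rintro ⟨d, c⟩ ht
    rfl
  · rintro ⟨⟨a, x⟩, b, y⟩ hp
    simp only [mem_filter, mem_Q] at hp
    obtain ⟨⟨ha, hx, hb, hy, heq⟩, hd⟩ := hp
    subst hd
    have hsum : (a + b) * x = n := by rw [add_mul]; omega
    have hdiv : n / x = a + b := by rw [← hsum]; exact Nat.mul_div_cancel _ hx
    have : n / x - a = b := by omega
    rw [this]

/-- Evaluate the diagonal `a = b`. -/
lemma diagA_Q (n : ℕ) (hn : 0 < n) (F : ℕ → ℚ) :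
    ∑ p ∈ (Q n).filter (fun p => p.1.1 = p.2.1), F p.1.1
      = ∑ t ∈ n.divisors.sigma (fun d => Finset.Ico 1 (n / d)), F t.1 := by
  refine Finset.sum_nbij' (fun p => ⟨p.1.1, p.1.2⟩)
    (fun t => ((t.1, t.2), (t.1, n / t.1 - t.2))) ?_ ?_ ?_ ?_ ?_
  · rintro ⟨⟨a, x⟩, b, y⟩ hp
    simp only [mem_filter, mem_Q] at hp
    obtain ⟨⟨ha, hx, hb, hy, heq⟩, hd⟩ := hp
    subst hd
    have hsum : a * (x + y) = n := by rw [mul_add]; omega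
    simp only [Finset.mem_sigma, Nat.mem_divisors, Finset.mem_Ico]
    have hdvd : a ∣ n := Dvd.intro (x + y) hsum
    have hdiv : n / a = x + y := by rw [← hsum]; exact Nat.mul_div_cancel_left _ ha
    exact ⟨⟨hdvd, by omega⟩, by omega, by omega⟩
  · rintro ⟨d, c⟩ ht
    simp only [Finset.mem_sigma, Nat.mem_divisors, Finset.mem_Ico] at ht
    obtain ⟨⟨hdvd, hn0⟩, hc1, hc2⟩ := ht
    have hd : 0 < d := Nat.pos_of_dvd_of_pos hdvd hn
    simp only [mem_filter, mem_Q]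
    refine ⟨⟨by omega, by omega, by omega, by omega, ?_⟩, by trivial⟩
    have : d * c + d * (n / d - c) = d * (c + (n / d - c)) := by ring
    rw [this]
    have h2 : c + (n / d - c) = n / d := by omega
    rw [h2]
    exact Nat.mul_div_cancel' hdvd
  · rintro ⟨⟨a, x⟩, b, y⟩ hp
    simp only [mem_filter, mem_Q] at hp
    obtain ⟨⟨ha, hx, hb, hy, heq⟩, hd⟩ := hp
    subst hd
    have hsum : a * (x + y) = n := by rw [mul_add]; omega
    have hdiv : n / a = x + y := by rw [← hsum]; exact Nat.mul_div_cancel_left _ ha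
    simp only [Prod.mk.injEq, true_and, and_true]
    omega
  · rintro ⟨d, c⟩ ht
    rfl
  · rintro ⟨⟨a, x⟩, b, y⟩ hp
    rfl



lemma fh1 (e : ℕ) : ∑ c ∈ Finset.Ico 1 e, (c : ℚ) = (e : ℚ) * ((e : ℚ) - 1) / 2 := by
  have hr : ∀ m : ℕ, ∑ c ∈ Finset.range m, (c : ℚ) = (m : ℚ) * ((m : ℚ) - 1) / 2 := by
    intro m
    induction m with
    | zero => simp
    | succ k ih => rw [Finset.sum_range_succ, ih]; push_cast; ring
  rcases Nat.eq_zero_or_pos e with h | h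
  · subst h; simp
  · have := Finset.sum_eq_sum_Ico_succ_bot h (fun c => (c : ℚ))
    rw [← Finset.range_eq_Ico] at this
    rw [← hr e, this]
    simp

lemma fh2 (e : ℕ) : ∑ c ∈ Finset.Ico 1 e, (c : ℚ) ^ 2
    = (e : ℚ) * ((e : ℚ) - 1) * (2 * (e : ℚ) - 1) / 6 := by
  have hr : ∀ m : ℕ, ∑ c ∈ Finset.range m, (c : ℚ) ^ 2
      = (m : ℚ) * ((m : ℚ) - 1) * (2 * (m : ℚ) - 1) / 6 := by
    intro m
    induction m with
    | zero => simp
    | succ k ih => rw [Finset.sum_range_succ, ih]; push_cast; ring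
  rcases Nat.eq_zero_or_pos e with h | h
  · subst h; simp
  · have := Finset.sum_eq_sum_Ico_succ_bot h (fun c => (c : ℚ) ^ 2)
    rw [← Finset.range_eq_Ico] at this
    rw [← hr e, this]
    simp

/-- The inner diagonal sum over `c`. -/
lemma inner2 (e : ℕ) (he : 1 ≤ e) :
    ∑ c ∈ Finset.Ico 1 e, ((c : ℚ) * ((e - c : ℕ) : ℚ) + 2 * ((e - c : ℕ) : ℚ) ^ 2)
      = (5 * (e : ℚ) ^ 3 - 6 * (e : ℚ) ^ 2 + (e : ℚ)) / 6 := by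
  have hcast : ∀ c ∈ Finset.Ico 1 e,
      ((c : ℚ) * ((e - c : ℕ) : ℚ) + 2 * ((e - c : ℕ) : ℚ) ^ 2)
        = (c : ℚ) ^ 2 - 3 * (e : ℚ) * (c : ℚ) + 2 * (e : ℚ) ^ 2 := by
    intro c hc
    have h2 : c ≤ e := (Finset.mem_Ico.mp hc).2.le
    rw [Nat.cast_sub h2]; ring
  rw [Finset.sum_congr rfl hcast]
  have hsplit : ∑ c ∈ Finset.Ico 1 e,
      ((c : ℚ) ^ 2 - 3 * (e : ℚ) * (c : ℚ) + 2 * (e : ℚ) ^ 2)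
      = (∑ c ∈ Finset.Ico 1 e, (c : ℚ) ^ 2)
        - 3 * (e : ℚ) * (∑ c ∈ Finset.Ico 1 e, (c : ℚ))
        + ((e - 1 : ℕ) : ℚ) * (2 * (e : ℚ) ^ 2) := by
    rw [Finset.sum_add_distrib, Finset.sum_sub_distrib, Finset.mul_sum, Finset.sum_const,
      Nat.card_Ico, nsmul_eq_mul]
  rw [hsplit, fh1, fh2, Nat.cast_sub he]
  push_cast
  ring



end Besge

/-- `σₘ(n) = ∑_{d ∣ n} dᵐ`. -/
def sigmaFn (m n : ℕ) : ℕ := ∑ d ∈ n.divisors, d ^ m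

/-- Ramanujan's formula:
`∑_{k=1}^{n−1} σ(k)σ(n−k) = (5/12)σ₃(n) + (1/12)σ(n) − (1/2)nσ(n)`. -/
theorem stmt_7 (n : ℕ) (hn : 0 < n) :
    ∑ k ∈ Finset.Ico 1 n, (sigmaFn 1 k : ℚ) * (sigmaFn 1 (n - k) : ℚ)
      = 5 / 12 * (sigmaFn 3 n : ℚ) + 1 / 12 * (sigmaFn 1 n : ℚ)
        - 1 / 2 * (n : ℚ) * (sigmaFn 1 n : ℚ) := by
  classical
  have hσ : ∀ m k : ℕ, ((sigmaFn m k : ℕ) : ℚ) = ∑ d ∈ k.divisors, (d : ℚ) ^ m := by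
    intro m k
    unfold sigmaFn
    push_cast
    rfl
  have hσ1 : ∀ k : ℕ, ((sigmaFn 1 k : ℕ) : ℚ) = ∑ d ∈ k.divisors, (d : ℚ) := by
    intro k
    rw [hσ]
    exact Finset.sum_congr rfl fun d _ => pow_one _
  -- Step 0: the convolution as a sum over quadruples
  have hconv : (∑ k ∈ Finset.Ico 1 n, (sigmaFn 1 k : ℚ) * (sigmaFn 1 (n - k) : ℚ))
      = ∑ p ∈ Besge.Q n, (p.1.1 : ℚ) * (p.2.1 : ℚ) := by
    rw [← Besge.conv_Q n (fun d => (d : ℚ)) (fun d => (d : ℚ))]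
    refine Finset.sum_congr rfl fun k _ => ?_
    rw [hσ1 k, hσ1 (n - k)]
  -- trichotomies for the auxiliary function H = ab - 2b²
  have t1 : (∑ p ∈ Besge.Q n, ((p.1.1 : ℚ) * (p.2.1 : ℚ) - 2 * (p.2.1 : ℚ) ^ 2))
      = (∑ p ∈ (Besge.Q n).filter (fun p => p.1.1 < p.2.1),
            ((p.1.1 : ℚ) * (p.2.1 : ℚ) - 2 * (p.2.1 : ℚ) ^ 2))
        + (∑ p ∈ (Besge.Q n).filter (fun p => p.1.1 = p.2.1),
            ((p.1.1 : ℚ) * (p.2.1 : ℚ) - 2 * (p.2.1 : ℚ) ^ 2))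
        + (∑ p ∈ (Besge.Q n).filter (fun p => p.2.1 < p.1.1),
            ((p.1.1 : ℚ) * (p.2.1 : ℚ) - 2 * (p.2.1 : ℚ) ^ 2)) :=
    Besge.tri (Besge.Q n) (fun p => p.1.1) (fun p => p.2.1) _
  have t2 : (∑ p ∈ Besge.Q n, ((p.1.1 : ℚ) * (p.2.1 : ℚ) - 2 * (p.2.1 : ℚ) ^ 2))
      = (∑ p ∈ (Besge.Q n).filter (fun p => p.1.2 < p.2.2),
            ((p.1.1 : ℚ) * (p.2.1 : ℚ) - 2 * (p.2.1 : ℚ) ^ 2))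
        + (∑ p ∈ (Besge.Q n).filter (fun p => p.1.2 = p.2.2),
            ((p.1.1 : ℚ) * (p.2.1 : ℚ) - 2 * (p.2.1 : ℚ) ^ 2))
        + (∑ p ∈ (Besge.Q n).filter (fun p => p.2.2 < p.1.2),
            ((p.1.1 : ℚ) * (p.2.1 : ℚ) - 2 * (p.2.1 : ℚ) ^ 2)) :=
    Besge.tri (Besge.Q n) (fun p => p.1.2) (fun p => p.2.2) _
  -- transports
  have e1 : (∑ p ∈ (Besge.Q n).filter (fun p => p.2.2 < p.1.2),
        ((p.1.1 : ℚ) * ((p.1.1 + p.2.1 : ℕ) : ℚ) - 2 * ((p.1.1 + p.2.1 : ℕ) : ℚ) ^ 2))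
      = ∑ p ∈ (Besge.Q n).filter (fun p => p.1.1 < p.2.1),
          ((p.1.1 : ℚ) * (p.2.1 : ℚ) - 2 * (p.2.1 : ℚ) ^ 2) :=
    Besge.sum_phi_Q n (fun a b => (a : ℚ) * (b : ℚ) - 2 * (b : ℚ) ^ 2)
  have e2 : (∑ p ∈ (Besge.Q n).filter (fun p => p.1.1 < p.2.1),
        ((p.2.1 : ℚ) * (p.1.1 : ℚ) - 2 * (p.1.1 : ℚ) ^ 2))
      = ∑ p ∈ (Besge.Q n).filter (fun p => p.2.1 < p.1.1),
          ((p.1.1 : ℚ) * (p.2.1 : ℚ) - 2 * (p.2.1 : ℚ) ^ 2) :=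
    Besge.sum_swap_Q n (fun p => p.2.1 < p.1.1)
      (fun p => (p.1.1 : ℚ) * (p.2.1 : ℚ) - 2 * (p.2.1 : ℚ) ^ 2)
  have e3 : (∑ p ∈ (Besge.Q n).filter (fun p => p.2.2 < p.1.2),
        (((p.1.1 + p.2.1 : ℕ) : ℚ) * (p.1.1 : ℚ) - 2 * (p.1.1 : ℚ) ^ 2))
      = ∑ p ∈ (Besge.Q n).filter (fun p => p.1.1 < p.2.1),
          ((p.2.1 : ℚ) * (p.1.1 : ℚ) - 2 * (p.1.1 : ℚ) ^ 2) :=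
    Besge.sum_phi_Q n (fun a b => (b : ℚ) * (a : ℚ) - 2 * (a : ℚ) ^ 2)
  have e4 : (∑ p ∈ (Besge.Q n).filter (fun p => p.2.2 < p.1.2),
        ((p.2.1 : ℚ) * (p.1.1 : ℚ) - 2 * (p.1.1 : ℚ) ^ 2))
      = ∑ p ∈ (Besge.Q n).filter (fun p => p.1.2 < p.2.2),
          ((p.1.1 : ℚ) * (p.2.1 : ℚ) - 2 * (p.2.1 : ℚ) ^ 2) :=
    Besge.sum_swap_Q n (fun p => p.1.2 < p.2.2)
      (fun p => (p.1.1 : ℚ) * (p.2.1 : ℚ) - 2 * (p.2.1 : ℚ) ^ 2)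
  -- pointwise combination: the brackets collapse to 4ab
  have hsplit : (∑ p ∈ (Besge.Q n).filter (fun p => p.2.2 < p.1.2),
          ((p.2.1 : ℚ) * (p.1.1 : ℚ) - 2 * (p.1.1 : ℚ) ^ 2))
        + (∑ p ∈ (Besge.Q n).filter (fun p => p.2.2 < p.1.2),
          ((p.1.1 : ℚ) * (p.2.1 : ℚ) - 2 * (p.2.1 : ℚ) ^ 2))
        - (∑ p ∈ (Besge.Q n).filter (fun p => p.2.2 < p.1.2),
          ((p.1.1 : ℚ) * ((p.1.1 + p.2.1 : ℕ) : ℚ) - 2 * ((p.1.1 + p.2.1 : ℕ) : ℚ) ^ 2))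
        - (∑ p ∈ (Besge.Q n).filter (fun p => p.2.2 < p.1.2),
          (((p.1.1 + p.2.1 : ℕ) : ℚ) * (p.1.1 : ℚ) - 2 * (p.1.1 : ℚ) ^ 2))
      = 4 * ∑ p ∈ (Besge.Q n).filter (fun p => p.2.2 < p.1.2),
          ((p.1.1 : ℚ) * (p.2.1 : ℚ)) := by
    rw [← Finset.sum_add_distrib, ← Finset.sum_sub_distrib, ← Finset.sum_sub_distrib,
      Finset.mul_sum]
    refine Finset.sum_congr rfl fun p _ => ?_
    push_cast
    ring
  -- trichotomy for ab
  have sA : (∑ p ∈ Besge.Q n, ((p.1.1 : ℚ) * (p.2.1 : ℚ)))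
      = (∑ p ∈ (Besge.Q n).filter (fun p => p.1.2 < p.2.2), ((p.1.1 : ℚ) * (p.2.1 : ℚ)))
        + (∑ p ∈ (Besge.Q n).filter (fun p => p.1.2 = p.2.2), ((p.1.1 : ℚ) * (p.2.1 : ℚ)))
        + (∑ p ∈ (Besge.Q n).filter (fun p => p.2.2 < p.1.2), ((p.1.1 : ℚ) * (p.2.1 : ℚ))) :=
    Besge.tri (Besge.Q n) (fun p => p.1.2) (fun p => p.2.2) _
  have sB : (∑ p ∈ (Besge.Q n).filter (fun p => p.2.2 < p.1.2),
        ((p.2.1 : ℚ) * (p.1.1 : ℚ)))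
      = ∑ p ∈ (Besge.Q n).filter (fun p => p.1.2 < p.2.2), ((p.1.1 : ℚ) * (p.2.1 : ℚ)) :=
    Besge.sum_swap_Q n (fun p => p.1.2 < p.2.2) (fun p => (p.1.1 : ℚ) * (p.2.1 : ℚ))
  have sB' : (∑ p ∈ (Besge.Q n).filter (fun p => p.2.2 < p.1.2),
        ((p.2.1 : ℚ) * (p.1.1 : ℚ)))
      = ∑ p ∈ (Besge.Q n).filter (fun p => p.2.2 < p.1.2), ((p.1.1 : ℚ) * (p.2.1 : ℚ)) :=
    Finset.sum_congr rfl fun p _ => mul_comm _ _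
  -- rewrite the diagonals
  have dAe : (∑ p ∈ (Besge.Q n).filter (fun p => p.1.1 = p.2.1),
        ((p.1.1 : ℚ) * (p.2.1 : ℚ) - 2 * (p.2.1 : ℚ) ^ 2))
      = ∑ p ∈ (Besge.Q n).filter (fun p => p.1.1 = p.2.1), (-(p.1.1 : ℚ) ^ 2) := by
    refine Finset.sum_congr rfl fun p hp => ?_
    have h := (Finset.mem_filter.mp hp).2
    rw [← h]
    ring
  have dAe2 : (∑ p ∈ (Besge.Q n).filter (fun p => p.1.1 = p.2.1), (-(p.1.1 : ℚ) ^ 2))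
      = ∑ t ∈ n.divisors.sigma (fun d => Finset.Ico 1 (n / d)), (-(t.1 : ℚ) ^ 2) :=
    Besge.diagA_Q n hn (fun d => -(d : ℚ) ^ 2)
  have dXe : (∑ p ∈ (Besge.Q n).filter (fun p => p.1.2 = p.2.2),
        ((p.1.1 : ℚ) * (p.2.1 : ℚ) + 2 * (p.2.1 : ℚ) ^ 2))
      = 2 * (∑ p ∈ (Besge.Q n).filter (fun p => p.1.2 = p.2.2), ((p.1.1 : ℚ) * (p.2.1 : ℚ)))
        - (∑ p ∈ (Besge.Q n).filter (fun p => p.1.2 = p.2.2),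
            ((p.1.1 : ℚ) * (p.2.1 : ℚ) - 2 * (p.2.1 : ℚ) ^ 2)) := by
    rw [Finset.mul_sum, ← Finset.sum_sub_distrib]
    refine Finset.sum_congr rfl fun p _ => ?_
    ring
  have dXe2 : (∑ p ∈ (Besge.Q n).filter (fun p => p.1.2 = p.2.2),
        ((p.1.1 : ℚ) * (p.2.1 : ℚ) + 2 * (p.2.1 : ℚ) ^ 2))
      = ∑ t ∈ n.divisors.sigma (fun d => Finset.Ico 1 (n / d)),
          ((t.2 : ℚ) * ((n / t.1 - t.2 : ℕ) : ℚ) + 2 * ((n / t.1 - t.2 : ℕ) : ℚ) ^ 2) :=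
    Besge.diagX_Q n hn (fun a b => (a : ℚ) * (b : ℚ) + 2 * (b : ℚ) ^ 2)
  -- unfold the sigma sums
  have nest1 : (∑ t ∈ n.divisors.sigma (fun d => Finset.Ico 1 (n / d)), (-(t.1 : ℚ) ^ 2))
      = ∑ d ∈ n.divisors, ∑ c ∈ Finset.Ico 1 (n / d), (-(d : ℚ) ^ 2) :=
    (Finset.sum_sigma' n.divisors (fun d => Finset.Ico 1 (n / d)) (fun d _ => -(d : ℚ) ^ 2)).symm
  have nest2 : (∑ t ∈ n.divisors.sigma (fun d => Finset.Ico 1 (n / d)),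
        ((t.2 : ℚ) * ((n / t.1 - t.2 : ℕ) : ℚ) + 2 * ((n / t.1 - t.2 : ℕ) : ℚ) ^ 2))
      = ∑ d ∈ n.divisors, ∑ c ∈ Finset.Ico 1 (n / d),
          ((c : ℚ) * ((n / d - c : ℕ) : ℚ) + 2 * ((n / d - c : ℕ) : ℚ) ^ 2) :=
    (Finset.sum_sigma' n.divisors (fun d => Finset.Ico 1 (n / d))
      (fun d c => (c : ℚ) * ((n / d - c : ℕ) : ℚ) + 2 * ((n / d - c : ℕ) : ℚ) ^ 2)).symm
  -- evaluate the inner sums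
  have big1 : (∑ d ∈ n.divisors, ∑ c ∈ Finset.Ico 1 (n / d), (-(d : ℚ) ^ 2))
      = ∑ d ∈ n.divisors, (-(((n / d : ℕ) : ℚ) - 1) * (d : ℚ) ^ 2) := by
    refine Finset.sum_congr rfl fun d hd => ?_
    obtain ⟨hdvd, hn0⟩ := Nat.mem_divisors.mp hd
    have he : 1 ≤ n / d := Nat.div_pos (Nat.le_of_dvd hn hdvd) (Nat.pos_of_dvd_of_pos hdvd hn)
    rw [Finset.sum_const, Nat.card_Ico, nsmul_eq_mul, Nat.cast_sub he]
    push_cast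
    ring
  have big2 : (∑ d ∈ n.divisors, ∑ c ∈ Finset.Ico 1 (n / d),
        ((c : ℚ) * ((n / d - c : ℕ) : ℚ) + 2 * ((n / d - c : ℕ) : ℚ) ^ 2))
      = ∑ d ∈ n.divisors,
          ((5 * ((n / d : ℕ) : ℚ) ^ 3 - 6 * ((n / d : ℕ) : ℚ) ^ 2 + ((n / d : ℕ) : ℚ)) / 6) := by
    refine Finset.sum_congr rfl fun d hd => ?_
    obtain ⟨hdvd, hn0⟩ := Nat.mem_divisors.mp hd
    have he : 1 ≤ n / d := Nat.div_pos (Nat.le_of_dvd hn hdvd) (Nat.pos_of_dvd_of_pos hdvd hn)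
    exact Besge.inner2 (n / d) he
  have flip : (∑ d ∈ n.divisors,
        ((5 * ((n / d : ℕ) : ℚ) ^ 3 - 6 * ((n / d : ℕ) : ℚ) ^ 2 + ((n / d : ℕ) : ℚ)) / 6))
      = ∑ d ∈ n.divisors, ((5 * (d : ℚ) ^ 3 - 6 * (d : ℚ) ^ 2 + (d : ℚ)) / 6) :=
    Nat.sum_div_divisors n (fun m => (5 * (m : ℚ) ^ 3 - 6 * (m : ℚ) ^ 2 + (m : ℚ)) / 6)
  have second : (∑ d ∈ n.divisors, (-(((n / d : ℕ) : ℚ) - 1) * (d : ℚ) ^ 2))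
      = ∑ d ∈ n.divisors, (-((n : ℚ) * (d : ℚ) - (d : ℚ) ^ 2)) := by
    refine Finset.sum_congr rfl fun d hd => ?_
    obtain ⟨hdvd, _⟩ := Nat.mem_divisors.mp hd
    have hcast : ((n / d : ℕ) : ℚ) * (d : ℚ) = (n : ℚ) := by
      rw [← Nat.cast_mul, Nat.div_mul_cancel hdvd]
    linear_combination (-(d : ℚ)) * hcast
  have fin1 : (∑ d ∈ n.divisors, ((5 * (d : ℚ) ^ 3 - 6 * (d : ℚ) ^ 2 + (d : ℚ)) / 6))
        + (∑ d ∈ n.divisors, (-((n : ℚ) * (d : ℚ) - (d : ℚ) ^ 2)))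
      = ∑ d ∈ n.divisors,
          (5 / 6 * (d : ℚ) ^ 3 + 1 / 6 * (d : ℚ) - (n : ℚ) * (d : ℚ)) := by
    rw [← Finset.sum_add_distrib]
    refine Finset.sum_congr rfl fun d _ => ?_
    ring
  have fin2 : (∑ d ∈ n.divisors,
        (5 / 6 * (d : ℚ) ^ 3 + 1 / 6 * (d : ℚ) - (n : ℚ) * (d : ℚ)))
      = 5 / 6 * (∑ d ∈ n.divisors, (d : ℚ) ^ 3) + 1 / 6 * (∑ d ∈ n.divisors, (d : ℚ))
        - (n : ℚ) * (∑ d ∈ n.divisors, (d : ℚ)) := by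
    rw [Finset.sum_sub_distrib, Finset.sum_add_distrib, ← Finset.mul_sum, ← Finset.mul_sum,
      ← Finset.mul_sum]
  rw [hconv, hσ 3 n, hσ1 n]
  linarith [t1, t2, e1, e2, e3, e4, hsplit, sA, sB, sB', dAe, dAe2, dXe, dXe2,
    nest1, nest2, big1, big2, flip, second, fin1, fin2]
end

section
/- For any positive integer c, the sum of k·ℓ over all quadruples of positive integers (a, b, k, ℓ) with k < ℓ and a·k + b·ℓ = c equals (5/24)·σ₃(c) + (1/2)·σ₂(c) + (1/24 − 3c/4)·σ₁(c). -/
open Finset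

def Ed (c : ℕ) : Finset (ℕ × ℕ × ℕ × ℕ) :=
  ((Finset.Icc 1 c ×ˢ Finset.Icc 1 c ×ˢ Finset.Icc 1 c ×ˢ Finset.Icc 1 c).filter
    (fun q => q.1 * q.2.2.1 + q.2.1 * q.2.2.2 = c))

lemma mem_Ed {c : ℕ} {q : ℕ × ℕ × ℕ × ℕ} :
    q ∈ Ed c ↔ 1 ≤ q.1 ∧ 1 ≤ q.2.1 ∧ 1 ≤ q.2.2.1 ∧ 1 ≤ q.2.2.2 ∧
      q.1 * q.2.2.1 + q.2.1 * q.2.2.2 = c := by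
  obtain ⟨a, b, k, l⟩ := q
  simp only [Ed, mem_filter, mem_product, mem_Icc]
  constructor
  · rintro ⟨⟨h1, h2, h3, h4⟩, h5⟩
    exact ⟨h1.1, h2.1, h3.1, h4.1, h5⟩
  · rintro ⟨ha, hb, hk, hl, he⟩
    have h1 : a * k ≤ c := by omega
    have h2 : b * l ≤ c := by omega
    have hac : a ≤ c := le_trans (Nat.le_mul_of_pos_right a hk) h1
    have hkc : k ≤ c := le_trans (Nat.le_mul_of_pos_left k ha) h1
    have hbc : b ≤ c := le_trans (Nat.le_mul_of_pos_right b hl) h2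
    have hlc : l ≤ c := le_trans (Nat.le_mul_of_pos_left l hb) h2
    exact ⟨⟨⟨ha, hac⟩, ⟨hb, hbc⟩, ⟨hk, hkc⟩, ⟨hl, hlc⟩⟩, he⟩

/-- weight -/
def Fw (x y : ℕ) : ℚ := (x : ℚ) ^ 2 + (y : ℚ) ^ 2 + (x : ℚ) * y

/-- bijection for a > b : maps to k < l part -/
lemma bij_agtb (c : ℕ) :
    ∑ q ∈ (Ed c).filter (fun q => q.2.1 < q.1), Fw q.2.2.1 q.2.2.2
      = ∑ q ∈ (Ed c).filter (fun q => q.2.2.1 < q.2.2.2),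
          Fw q.2.2.1 (q.2.2.2 - q.2.2.1) := by
  refine Finset.sum_nbij' (fun q => (q.1 - q.2.1, q.2.1, q.2.2.1, q.2.2.1 + q.2.2.2))
    (fun q => (q.1 + q.2.1, q.2.1, q.2.2.1, q.2.2.2 - q.2.2.1)) ?_ ?_ ?_ ?_ ?_
  · rintro ⟨a, b, k, l⟩ hq
    simp only [mem_filter, mem_Ed] at hq ⊢
    obtain ⟨⟨ha, hb, hk, hl, he⟩, hab⟩ := hq
    refine ⟨⟨by omega, hb, hk, by omega, ?_⟩, by omega⟩
    have h : a - b + b = a := by omega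
    calc (a - b) * k + b * (k + l) = (a - b + b) * k + b * l := by ring
      _ = c := by rw [h]; exact he
  · rintro ⟨a, b, k, l⟩ hq
    simp only [mem_filter, mem_Ed] at hq ⊢
    obtain ⟨⟨ha, hb, hk, hl, he⟩, hkl⟩ := hq
    refine ⟨⟨by omega, hb, hk, by omega, ?_⟩, by omega⟩
    have h : l - k + k = l := by omega
    calc (a + b) * k + b * (l - k) = a * k + b * (l - k + k) := by ring
      _ = c := by rw [h]; exact he
  · rintro ⟨a, b, k, l⟩ hq
    simp only [mem_filter, mem_Ed] at hq
    have : b ≤ a := le_of_lt hq.2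
    simp only [Prod.mk.injEq, and_true, true_and]
    omega
  · rintro ⟨a, b, k, l⟩ hq
    simp only [mem_filter, mem_Ed] at hq
    simp only [Prod.mk.injEq, and_true, true_and]
    omega
  · rintro ⟨a, b, k, l⟩ hq
    simp only
    congr 1
    omega

/-- bijection for b > a : maps to l < k part -/
lemma bij_bgta (c : ℕ) :
    ∑ q ∈ (Ed c).filter (fun q => q.1 < q.2.1), Fw q.2.2.1 q.2.2.2
      = ∑ q ∈ (Ed c).filter (fun q => q.2.2.2 < q.2.2.1),
          Fw (q.2.2.1 - q.2.2.2) q.2.2.2 := by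
  refine Finset.sum_nbij' (fun q => (q.1, q.2.1 - q.1, q.2.2.1 + q.2.2.2, q.2.2.2))
    (fun q => (q.1, q.2.1 + q.1, q.2.2.1 - q.2.2.2, q.2.2.2)) ?_ ?_ ?_ ?_ ?_
  · rintro ⟨a, b, k, l⟩ hq
    simp only [mem_filter, mem_Ed] at hq ⊢
    obtain ⟨⟨ha, hb, hk, hl, he⟩, hab⟩ := hq
    refine ⟨⟨ha, by omega, by omega, hl, ?_⟩, by omega⟩
    have h : b - a + a = b := by omega
    calc a * (k + l) + (b - a) * l = a * k + (b - a + a) * l := by ring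
      _ = c := by rw [h]; exact he
  · rintro ⟨a, b, k, l⟩ hq
    simp only [mem_filter, mem_Ed] at hq ⊢
    obtain ⟨⟨ha, hb, hk, hl, he⟩, hkl⟩ := hq
    refine ⟨⟨ha, by omega, by omega, hl, ?_⟩, by omega⟩
    have h : k - l + l = k := by omega
    calc a * (k - l) + (b + a) * l = a * (k - l + l) + b * l := by ring
      _ = c := by rw [h]; exact he
  · rintro ⟨a, b, k, l⟩ hq
    simp only [mem_filter, mem_Ed] at hq
    simp only [Prod.mk.injEq, and_true, true_and]
    omega
  · rintro ⟨a, b, k, l⟩ hq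
    simp only [mem_filter, mem_Ed] at hq
    simp only [Prod.mk.injEq, and_true, true_and]
    omega
  · rintro ⟨a, b, k, l⟩ hq
    simp only
    congr 1
    omega

/-- bijection for a = b : divisor sum -/
lemma bij_aeqb (c : ℕ) (hc : 0 < c) :
    ∑ q ∈ (Ed c).filter (fun q => q.1 = q.2.1), Fw q.2.2.1 q.2.2.2
      = ∑ x ∈ c.divisors.sigma (fun d => Finset.Ico 1 d), Fw x.2 (x.1 - x.2) := by
  refine Finset.sum_nbij' (fun q => ⟨q.2.2.1 + q.2.2.2, q.2.2.1⟩)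
    (fun x => (c / x.1, c / x.1, x.2, x.1 - x.2)) ?_ ?_ ?_ ?_ ?_
  · rintro ⟨a, b, k, l⟩ hq
    simp only [mem_filter, mem_Ed] at hq
    obtain ⟨⟨ha, hb, hk, hl, he⟩, hab⟩ := hq
    subst hab
    simp only [mem_sigma, Nat.mem_divisors, mem_Ico]
    refine ⟨⟨⟨a, ?_⟩, hc.ne'⟩, hk, by omega⟩
    rw [← he]; ring
  · rintro ⟨d, j⟩ hx
    simp only [mem_sigma, Nat.mem_divisors, mem_Ico] at hx
    obtain ⟨⟨hdvd, -⟩, hj1, hjd⟩ := hx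
    have hd : 0 < d := by omega
    have hcd : 1 ≤ c / d := Nat.one_le_div_iff hd |>.2 (Nat.le_of_dvd hc hdvd)
    simp only [mem_filter, mem_Ed]
    refine ⟨⟨hcd, hcd, hj1, by omega, ?_⟩, trivial⟩
    have : c / d * j + c / d * (d - j) = c / d * (j + (d - j)) := by ring
    rw [this]
    have : j + (d - j) = d := by omega
    rw [this, Nat.div_mul_cancel hdvd]
  · rintro ⟨a, b, k, l⟩ hq
    simp only [mem_filter, mem_Ed] at hq
    obtain ⟨⟨ha, hb, hk, hl, he⟩, hab⟩ := hq
    subst hab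
    have he' : c = a * (k + l) := by rw [← he]; ring
    have hdiv : c / (k + l) = a :=
      (Nat.eq_div_of_mul_eq_left (by omega) (by rw [← he]; ring)).symm
    simp only [Prod.mk.injEq, and_true, true_and]
    omega
  · rintro ⟨d, j⟩ hx
    simp only [mem_sigma, Nat.mem_divisors, mem_Ico] at hx
    have : j + (d - j) = d := by omega
    simp only [this]
  · rintro ⟨a, b, k, l⟩ hq
    simp only
    congr 1
    omega

/-- bijection for k = l : divisor sum -/
lemma bij_keql (c : ℕ) (hc : 0 < c) :
    ∑ q ∈ (Ed c).filter (fun q => q.2.2.1 = q.2.2.2), Fw q.2.2.1 q.2.2.2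
      = ∑ x ∈ c.divisors.sigma (fun d => Finset.Ico 1 (c / d)), Fw x.1 x.1 := by
  refine Finset.sum_nbij' (fun q => ⟨q.2.2.1, q.1⟩)
    (fun x => (x.2, c / x.1 - x.2, x.1, x.1)) ?_ ?_ ?_ ?_ ?_
  · rintro ⟨a, b, k, l⟩ hq
    simp only [mem_filter, mem_Ed] at hq
    obtain ⟨⟨ha, hb, hk, hl, he⟩, hkl⟩ := hq
    subst hkl
    have he' : (a + b) * k = c := by rw [← he]; ring
    have hdvd : k ∣ c := Dvd.intro (a + b) (by rw [← he']; ring)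
    have hck : c / k = a + b := (Nat.eq_div_of_mul_eq_left (by omega) he').symm
    simp only [mem_sigma, Nat.mem_divisors, mem_Ico]
    exact ⟨⟨hdvd, hc.ne'⟩, ha, by omega⟩
  · rintro ⟨d, j⟩ hx
    simp only [mem_sigma, Nat.mem_divisors, mem_Ico] at hx
    obtain ⟨⟨hdvd, -⟩, hj1, hjd⟩ := hx
    have hd : 0 < d := Nat.pos_of_dvd_of_pos hdvd hc
    simp only [mem_filter, mem_Ed]
    refine ⟨⟨hj1, by omega, hd, hd, ?_⟩, trivial⟩
    have : j * d + (c / d - j) * d = (j + (c / d - j)) * d := by ring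
    rw [this]
    have h2 : j + (c / d - j) = c / d := by omega
    rw [h2, Nat.div_mul_cancel hdvd]
  · rintro ⟨a, b, k, l⟩ hq
    simp only [mem_filter, mem_Ed] at hq
    obtain ⟨⟨ha, hb, hk, hl, he⟩, hkl⟩ := hq
    subst hkl
    have hck : c / k = a + b :=
      (Nat.eq_div_of_mul_eq_left (by omega : k ≠ 0) (by rw [← he]; ring)).symm
    simp only [Prod.mk.injEq, and_true, true_and]
    omega
  · rintro ⟨d, j⟩ hx
    simp only
  · rintro ⟨a, b, k, l⟩ hq
    simp only [mem_filter, mem_Ed] at hq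
    obtain ⟨-, hkl⟩ := hq
    simp only [hkl]

/-- symmetry: sum of kl over k<l equals sum over l<k -/
lemma sym_kl (c : ℕ) :
    ∑ q ∈ (Ed c).filter (fun q => q.2.2.1 < q.2.2.2),
        ((q.2.2.1 : ℚ) * (q.2.2.2 : ℚ))
      = ∑ q ∈ (Ed c).filter (fun q => q.2.2.2 < q.2.2.1),
          ((q.2.2.1 : ℚ) * (q.2.2.2 : ℚ)) := by
  refine Finset.sum_nbij' (fun q => (q.2.1, q.1, q.2.2.2, q.2.2.1))
    (fun q => (q.2.1, q.1, q.2.2.2, q.2.2.1)) ?_ ?_ ?_ ?_ ?_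
  · rintro ⟨a, b, k, l⟩ hq
    simp only [mem_filter, mem_Ed] at hq ⊢
    obtain ⟨⟨ha, hb, hk, hl, he⟩, hkl⟩ := hq
    exact ⟨⟨hb, ha, hl, hk, by omega⟩, hkl⟩
  · rintro ⟨a, b, k, l⟩ hq
    simp only [mem_filter, mem_Ed] at hq ⊢
    obtain ⟨⟨ha, hb, hk, hl, he⟩, hkl⟩ := hq
    exact ⟨⟨hb, ha, hl, hk, by omega⟩, hkl⟩
  · rintro ⟨a, b, k, l⟩ _; rfl
  · rintro ⟨a, b, k, l⟩ _; rfl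
  · rintro ⟨a, b, k, l⟩ _
    simp only
    ring

/-- trichotomy split -/
lemma tri_split {α : Type*} [DecidableEq α] (s : Finset α) (u v : α → ℕ) (f : α → ℚ) :
    ∑ x ∈ s, f x
      = ∑ x ∈ s.filter (fun x => u x < v x), f x
        + ∑ x ∈ s.filter (fun x => v x < u x), f x
        + ∑ x ∈ s.filter (fun x => u x = v x), f x := by
  rw [← Finset.sum_filter_add_sum_filter_not s (fun x => u x < v x) f]
  have h2 := Finset.sum_filter_add_sum_filter_not
    (s.filter (fun x => ¬ u x < v x)) (fun x => v x < u x) f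
  rw [Finset.filter_filter, Finset.filter_filter] at h2
  have e1 : s.filter (fun x => ¬ u x < v x ∧ v x < u x) = s.filter (fun x => v x < u x) :=
    Finset.filter_congr (fun x _ => by omega)
  have e2 : s.filter (fun x => ¬ u x < v x ∧ ¬ v x < u x)
      = s.filter (fun x => u x = v x) :=
    Finset.filter_congr (fun x _ => by omega)
  rw [e1, e2] at h2
  rw [← h2]
  ring

lemma gs1 (n : ℕ) : ∑ j ∈ Finset.range n, (j : ℚ) = ((n : ℚ) ^ 2 - n) / 2 := by
  induction n with
  | zero => simp
  | succ n ih => rw [Finset.sum_range_succ, ih]; push_cast; ring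

lemma gs2 (n : ℕ) : ∑ j ∈ Finset.range n, (j : ℚ) ^ 2
    = (2 * (n : ℚ) ^ 3 - 3 * (n : ℚ) ^ 2 + n) / 6 := by
  induction n with
  | zero => simp
  | succ n ih => rw [Finset.sum_range_succ, ih]; push_cast; ring

lemma inner1 (d : ℕ) (hd : 1 ≤ d) :
    ∑ j ∈ Finset.Ico 1 d, Fw j (d - j)
      = (5 * (d : ℚ) ^ 3 - 6 * (d : ℚ) ^ 2 + d) / 6 := by
  have step : ∀ j ∈ Finset.Ico 1 d, Fw j (d - j)
      = (j : ℚ) ^ 2 - (d : ℚ) * j + (d : ℚ) ^ 2 := by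
    intro j hj
    simp only [mem_Ico] at hj
    simp only [Fw]
    push_cast [Nat.cast_sub hj.2.le]
    ring
  rw [Finset.sum_congr rfl step]
  have hr : ∑ j ∈ Finset.range d, ((j : ℚ) ^ 2 - (d : ℚ) * j + (d : ℚ) ^ 2)
      = (d : ℚ) ^ 2 + ∑ j ∈ Finset.Ico 1 d, ((j : ℚ) ^ 2 - (d : ℚ) * j + (d : ℚ) ^ 2) := by
    rw [Finset.range_eq_Ico, Finset.sum_eq_sum_Ico_succ_bot hd]
    push_cast
    rw [Finset.sum_congr rfl (fun x _ => by ring :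
      ∀ x ∈ Finset.Ico 1 d, (x : ℚ) ^ 2 - (d : ℚ) * x + (d : ℚ) ^ 2
        = -((d : ℚ) * x) + (d : ℚ) ^ 2 + (x : ℚ) ^ 2)]
    ring
  have hsum : ∑ j ∈ Finset.range d, ((j : ℚ) ^ 2 - (d : ℚ) * j + (d : ℚ) ^ 2)
      = (2 * (d : ℚ) ^ 3 - 3 * (d : ℚ) ^ 2 + d) / 6
        - (d : ℚ) * (((d : ℚ) ^ 2 - d) / 2) + (d : ℚ) * (d : ℚ) ^ 2 := by
    rw [Finset.sum_add_distrib, Finset.sum_sub_distrib, ← Finset.mul_sum, gs1, gs2,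
      Finset.sum_const, Finset.card_range, nsmul_eq_mul]
  rw [hr] at hsum
  linarith [hsum]

lemma div_sum_d (c : ℕ) (hc : 0 < c) :
    ∑ x ∈ c.divisors.sigma (fun d => Finset.Ico 1 d), Fw x.2 (x.1 - x.2)
      = (5 * (∑ d ∈ c.divisors, (d : ℚ) ^ 3) - 6 * (∑ d ∈ c.divisors, (d : ℚ) ^ 2)
          + (∑ d ∈ c.divisors, (d : ℚ))) / 6 := by
  rw [Finset.sum_sigma]
  have step : ∀ d ∈ c.divisors, (∑ j ∈ Finset.Ico 1 d, Fw j (d - j))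
      = (5 * (d : ℚ) ^ 3 - 6 * (d : ℚ) ^ 2 + d) / 6 := by
    intro d hd
    have : 1 ≤ d := Nat.pos_of_dvd_of_pos (Nat.mem_divisors.1 hd).1 hc
    exact inner1 d this
  rw [Finset.sum_congr rfl step, ← Finset.sum_div]
  congr 1
  rw [Finset.sum_add_distrib, Finset.sum_sub_distrib, ← Finset.mul_sum, ← Finset.mul_sum]

lemma div_sum_k (c : ℕ) (hc : 0 < c) :
    ∑ x ∈ c.divisors.sigma (fun d => Finset.Ico 1 (c / d)), Fw x.1 x.1
      = 3 * ((c : ℚ) * (∑ d ∈ c.divisors, (d : ℚ)) - (∑ d ∈ c.divisors, (d : ℚ) ^ 2)) := by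
  rw [Finset.sum_sigma]
  have step : ∀ d ∈ c.divisors, (∑ _j ∈ Finset.Ico 1 (c / d), Fw d d)
      = 3 * ((c : ℚ) * d - (d : ℚ) ^ 2) := by
    intro d hd
    obtain ⟨hdvd, -⟩ := Nat.mem_divisors.1 hd
    have hd1 : 1 ≤ d := Nat.pos_of_dvd_of_pos hdvd hc
    have hcd1 : 1 ≤ c / d := (Nat.one_le_div_iff hd1).2 (Nat.le_of_dvd hc hdvd)
    have hmul : (c / d) * d = c := Nat.div_mul_cancel hdvd
    rw [Finset.sum_const, Nat.card_Ico, nsmul_eq_mul]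
    have hcast : ((c / d - 1 : ℕ) : ℚ) = ((c / d : ℕ) : ℚ) - 1 := by
      push_cast [Nat.cast_sub hcd1]; ring
    rw [hcast]
    have hcast2 : ((c / d : ℕ) : ℚ) * d = c := by
      rw [← Nat.cast_mul, hmul]
    simp only [Fw]
    nlinarith [hcast2]
  rw [Finset.sum_congr rfl step, ← Finset.mul_sum, Finset.sum_sub_distrib, ← Finset.mul_sum]

lemma diff_kl (c : ℕ) :
    ∑ q ∈ (Ed c).filter (fun q => q.2.2.1 < q.2.2.2), Fw q.2.2.1 q.2.2.2
      - ∑ q ∈ (Ed c).filter (fun q => q.2.2.1 < q.2.2.2), Fw q.2.2.1 (q.2.2.2 - q.2.2.1)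
      = 2 * ∑ q ∈ (Ed c).filter (fun q => q.2.2.1 < q.2.2.2),
          ((q.2.2.1 : ℚ) * (q.2.2.2 : ℚ)) := by
  rw [← Finset.sum_sub_distrib, Finset.mul_sum]
  refine Finset.sum_congr rfl ?_
  rintro ⟨a, b, k, l⟩ hq
  simp only [Finset.mem_filter] at hq
  have hkl : k < l := hq.2
  simp only [Fw]
  push_cast [Nat.cast_sub hkl.le]
  ring

lemma diff_lk (c : ℕ) :
    ∑ q ∈ (Ed c).filter (fun q => q.2.2.2 < q.2.2.1), Fw q.2.2.1 q.2.2.2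
      - ∑ q ∈ (Ed c).filter (fun q => q.2.2.2 < q.2.2.1), Fw (q.2.2.1 - q.2.2.2) q.2.2.2
      = 2 * ∑ q ∈ (Ed c).filter (fun q => q.2.2.2 < q.2.2.1),
          ((q.2.2.1 : ℚ) * (q.2.2.2 : ℚ)) := by
  rw [← Finset.sum_sub_distrib, Finset.mul_sum]
  refine Finset.sum_congr rfl ?_
  rintro ⟨a, b, k, l⟩ hq
  simp only [Finset.mem_filter] at hq
  have hkl : l < k := hq.2
  simp only [Fw]
  push_cast [Nat.cast_sub hkl.le]
  ring

theorem stmt_12' (c : ℕ) (hc : 0 < c) :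
    ∑ q ∈ (Ed c).filter (fun q => q.2.2.1 < q.2.2.2),
        ((q.2.2.1 : ℚ) * (q.2.2.2 : ℚ))
      = 5 / 24 * (∑ d ∈ c.divisors, (d : ℚ) ^ 3) + 1 / 2 * (∑ d ∈ c.divisors, (d : ℚ) ^ 2)
        + (1 / 24 - 3 * (c : ℚ) / 4) * (∑ d ∈ c.divisors, (d : ℚ)) := by
  set S1 := ∑ d ∈ c.divisors, (d : ℚ) with hS1
  set S2 := ∑ d ∈ c.divisors, (d : ℚ) ^ 2 with hS2
  set S3 := ∑ d ∈ c.divisors, (d : ℚ) ^ 3 with hS3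
  set T := ∑ q ∈ (Ed c).filter (fun q => q.2.2.1 < q.2.2.2),
      ((q.2.2.1 : ℚ) * (q.2.2.2 : ℚ)) with hT
  have hA := tri_split (Ed c) (fun q => q.1) (fun q => q.2.1)
    (fun q => Fw q.2.2.1 q.2.2.2)
  have hK := tri_split (Ed c) (fun q => q.2.2.1) (fun q => q.2.2.2)
    (fun q => Fw q.2.2.1 q.2.2.2)
  rw [bij_bgta c, bij_agtb c, bij_aeqb c hc, div_sum_d c hc] at hA
  rw [bij_keql c hc, div_sum_k c hc] at hK
  have key : ∑ q ∈ Ed c, Fw q.2.2.1 q.2.2.2 = ∑ q ∈ Ed c, Fw q.2.2.1 q.2.2.2 := rfl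
  have h1 := diff_kl c
  have h2 := diff_lk c
  have h3 := sym_kl c
  rw [← hT] at h1
  rw [← h3, ← hT] at h2
  linarith [hA, hK, h1, h2]

lemma sigmaFn_cast (m c : ℕ) : (sigmaFn m c : ℚ) = ∑ d ∈ c.divisors, (d : ℚ) ^ m := by
  rw [sigmaFn]
  push_cast
  rfl

/-- `∑_{(a,b,k,ℓ) : k<ℓ, ak+bℓ=c} kℓ = (5/24)σ₃(c) + (1/2)σ₂(c) + (1/24 − 3c/4)σ₁(c)`. -/
theorem stmt_12 (c : ℕ) (hc : 0 < c) :
    ∑ q ∈ ((Finset.Icc 1 c ×ˢ Finset.Icc 1 c ×ˢ Finset.Icc 1 c ×ˢ Finset.Icc 1 c).filter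
      (fun q => q.2.2.1 < q.2.2.2 ∧ q.1 * q.2.2.1 + q.2.1 * q.2.2.2 = c)),
        ((q.2.2.1 : ℚ) * (q.2.2.2 : ℚ))
      = 5 / 24 * (sigmaFn 3 c : ℚ) + 1 / 2 * (sigmaFn 2 c : ℚ)
        + (1 / 24 - 3 * (c : ℚ) / 4) * (sigmaFn 1 c : ℚ) := by
  have hset : ((Finset.Icc 1 c ×ˢ Finset.Icc 1 c ×ˢ Finset.Icc 1 c ×ˢ Finset.Icc 1 c).filter
      (fun q => q.2.2.1 < q.2.2.2 ∧ q.1 * q.2.2.1 + q.2.1 * q.2.2.2 = c))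
      = (Ed c).filter (fun q => q.2.2.1 < q.2.2.2) := by
    rw [Ed, Finset.filter_filter]
    exact Finset.filter_congr (fun q _ => and_comm)
  rw [hset, stmt_12' c hc, sigmaFn_cast, sigmaFn_cast, sigmaFn_cast]
  norm_num
end

section
/- For every integer n > 1, σ₃(n) > n·φ(n)·σ₁(n), where φ is Euler's totient function and σ_m(n) is the sum of m-th powers of the divisors of n. -/
open Finset

/-- `φ(a·b) ≤ a·φ(b)`: reduction mod `b` maps units to units with fibers of size `≤ a`. -/
lemma totient_mul_le_mul_totient (a b : ℕ) : Nat.totient (a * b) ≤ a * Nat.totient b := by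
  rcases Nat.eq_zero_or_pos b with rfl | hb
  · simp
  rw [Nat.totient_eq_card_coprime, Nat.totient_eq_card_coprime]
  apply Finset.card_le_mul_card_image_of_maps_to (f := fun k => k % b)
  · intro k hk
    simp only [mem_filter, mem_range] at hk ⊢
    refine ⟨Nat.mod_lt _ hb, ?_⟩
    have h1 : Nat.Coprime b k :=
      Nat.Coprime.coprime_dvd_left (dvd_mul_left b a) hk.2
    have h2 : Nat.Coprime (k % b) b := by
      unfold Nat.Coprime
      rw [← Nat.gcd_rec]
      exact h1
    exact h2.symm
  · intro r _
    refine le_trans (Finset.card_le_card_of_injOn (t := Finset.range a)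
      (fun k => k / b) ?_ ?_) (le_of_eq (Finset.card_range a))
    · intro k hk
      simp only [coe_filter, mem_filter, mem_range, Set.mem_setOf_eq, mem_coe, coe_range, Set.mem_Iio] at hk ⊢
      exact Nat.div_lt_of_lt_mul (by rw [mul_comm]; exact hk.1.1)
    · intro x hx y hy hxy
      simp only [coe_filter, Set.mem_setOf_eq] at hx hy
      have h3 : x % b = r := hx.2
      have h4 : y % b = r := hy.2
      have h0 : x / b = y / b := hxy
      rw [← Nat.div_add_mod x b, ← Nat.div_add_mod y b, h0, h3, h4]

lemma key {d n : ℕ} (h : d ∣ n) : Nat.totient n * d ≤ n * Nat.totient d := by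
  obtain ⟨m, rfl⟩ := h
  calc Nat.totient (d * m) * d ≤ m * Nat.totient d * d := by
        have := totient_mul_le_mul_totient m d
        rw [mul_comm d m]
        exact Nat.mul_le_mul_right d this
    _ = d * m * Nat.totient d := by ring

lemma phi_mul_sigma_le (n : ℕ) : Nat.totient n * ∑ d ∈ n.divisors, d ≤ n * n := by
  calc Nat.totient n * ∑ d ∈ n.divisors, d
      = ∑ d ∈ n.divisors, Nat.totient n * d := Finset.mul_sum ..
    _ ≤ ∑ d ∈ n.divisors, n * Nat.totient d :=
        Finset.sum_le_sum fun d hd => key (Nat.dvd_of_mem_divisors hd)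
    _ = n * ∑ d ∈ n.divisors, Nat.totient d := (Finset.mul_sum ..).symm
    _ = n * n := by rw [Nat.sum_totient]

/-- For `n > 1`, `σ₃(n) > n·φ(n)·σ₁(n)`. -/
theorem stmt_14 (n : ℕ) (hn : 1 < n) :
    ∑ d ∈ n.divisors, d ^ 3 > n * n.totient * ∑ d ∈ n.divisors, d := by
  have hsub : ({1, n} : Finset ℕ) ⊆ n.divisors := by
    intro x hx
    simp only [mem_insert, mem_singleton] at hx
    rw [Nat.mem_divisors]
    rcases hx with rfl | rfl
    · exact ⟨one_dvd _, by omega⟩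
    · exact ⟨dvd_rfl, by omega⟩
  have h1 : 1 + n ^ 3 ≤ ∑ d ∈ n.divisors, d ^ 3 := by
    have := Finset.sum_le_sum_of_subset (f := fun d => d ^ 3) hsub
    rwa [Finset.sum_pair (by omega : (1:ℕ) ≠ n), one_pow] at this
  have h2 : n * n.totient * ∑ d ∈ n.divisors, d ≤ n ^ 3 := by
    calc n * n.totient * ∑ d ∈ n.divisors, d
        = n * (n.totient * ∑ d ∈ n.divisors, d) := by ring
      _ ≤ n * (n * n) := Nat.mul_le_mul_left n (phi_mul_sigma_le n)
      _ = n ^ 3 := by ring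
  omega
end

section
/- The four vectors (α, a), (β, b), (k, 0), (ℓ, 0) generate the lattice ℤ² (i.e., their integer linear combinations span ℤ²) if and only if gcd(a, b) = 1 and gcd(k, ℓ, aβ − bα) = 1. -/
/-- The vectors `(α,a)`, `(β,b)`, `(k,0)`, `(ℓ,0)` generate the lattice `ℤ²` iff
`gcd(a,b) = 1` and `gcd(k, ℓ, aβ − bα) = 1`. -/
theorem stmt_15 (a b k l α β : ℤ) (ha : 0 < a) (hb : 0 < b) (hk : 0 < k) (hl : 0 < l) :
    Submodule.span ℤ ({(α, a), (β, b), (k, 0), (l, 0)} : Set (ℤ × ℤ)) = ⊤ ↔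
      Int.gcd a b = 1 ∧ Int.gcd k (Int.gcd l (a * β - b * α)) = 1 := by
  set D : ℤ := a * β - b * α with hDdef
  set S : Set (ℤ × ℤ) := {(α, a), (β, b), (k, 0), (l, 0)} with hS
  set g : ℕ := Int.gcd k (Int.gcd l D) with hgdef
  have hgk : (g : ℤ) ∣ k := Int.gcd_dvd_left _ _
  have hgl : (g : ℤ) ∣ l := dvd_trans (Int.gcd_dvd_right _ _) (Int.gcd_dvd_left _ _)
  have hgD : (g : ℤ) ∣ D := dvd_trans (Int.gcd_dvd_right _ _) (Int.gcd_dvd_right _ _)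
  constructor
  · intro h
    have hmem : ∀ x : ℤ × ℤ, x ∈ Submodule.span ℤ S := by
      intro x; rw [h]; trivial
    -- gcd a b = 1
    have hP : ∀ x : ℤ × ℤ, x ∈ Submodule.span ℤ S → (Int.gcd a b : ℤ) ∣ x.2 := by
      intro x hx
      induction hx using Submodule.span_induction with
      | mem y hy =>
        rcases hy with h1 | h1 | h1 | h1 <;> subst h1 <;>
          simp [Int.gcd_dvd_left, Int.gcd_dvd_right]
      | zero => simp
      | add y z _ _ hy hz => exact dvd_add hy hz
      | smul c y _ hy => exact Dvd.dvd.mul_left hy c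
    have hab1 : (Int.gcd a b : ℤ) = 1 :=
      Int.eq_one_of_dvd_one (by positivity) (by simpa using hP (0, 1) (hmem _))
    have hab : Int.gcd a b = 1 := by exact_mod_cast hab1
    refine ⟨hab, ?_⟩
    -- two functionals
    have hQ : ∀ x : ℤ × ℤ, x ∈ Submodule.span ℤ S → (g : ℤ) ∣ a * x.1 - α * x.2 := by
      intro x hx
      induction hx using Submodule.span_induction with
      | mem y hy =>
        rcases hy with h1 | h1 | h1 | h1 <;> subst h1 <;> simp only []
        · have : a * α - α * a = 0 := by ring
          rw [this]; exact dvd_zero _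
        · have : a * β - α * b = D := by rw [hDdef]; ring
          rw [this]; exact hgD
        · have : a * k - α * 0 = k * a := by ring
          rw [this]; exact Dvd.dvd.mul_right hgk a
        · have : a * l - α * 0 = l * a := by ring
          rw [this]; exact Dvd.dvd.mul_right hgl a
      | zero => simp
      | add y z _ _ hy hz =>
        have : a * (y + z).1 - α * (y + z).2 = (a * y.1 - α * y.2) + (a * z.1 - α * z.2) := by
          simp [Prod.fst_add, Prod.snd_add]; ring
        rw [this]; exact dvd_add hy hz
      | smul c y _ hy =>
        have : a * (c • y).1 - α * (c • y).2 = c * (a * y.1 - α * y.2) := by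
          simp [Prod.smul_fst, Prod.smul_snd, smul_eq_mul]; ring
        rw [this]; exact Dvd.dvd.mul_left hy c
    have hR : ∀ x : ℤ × ℤ, x ∈ Submodule.span ℤ S → (g : ℤ) ∣ b * x.1 - β * x.2 := by
      intro x hx
      induction hx using Submodule.span_induction with
      | mem y hy =>
        rcases hy with h1 | h1 | h1 | h1 <;> subst h1 <;> simp only []
        · have : b * α - β * a = -D := by rw [hDdef]; ring
          rw [this]; exact Dvd.dvd.neg_right hgD
        · have : b * β - β * b = 0 := by ring
          rw [this]; exact dvd_zero _
        · have : b * k - β * 0 = k * b := by ring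
          rw [this]; exact Dvd.dvd.mul_right hgk b
        · have : b * l - β * 0 = l * b := by ring
          rw [this]; exact Dvd.dvd.mul_right hgl b
      | zero => simp
      | add y z _ _ hy hz =>
        have : b * (y + z).1 - β * (y + z).2 = (b * y.1 - β * y.2) + (b * z.1 - β * z.2) := by
          simp [Prod.fst_add, Prod.snd_add]; ring
        rw [this]; exact dvd_add hy hz
      | smul c y _ hy =>
        have : b * (c • y).1 - β * (c • y).2 = c * (b * y.1 - β * y.2) := by
          simp [Prod.smul_fst, Prod.smul_snd, smul_eq_mul]; ring
        rw [this]; exact Dvd.dvd.mul_left hy c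
    have hga : (g : ℤ) ∣ a := by simpa using hQ (1, 0) (hmem _)
    have hgb : (g : ℤ) ∣ b := by simpa using hR (1, 0) (hmem _)
    have : (g : ℤ) ∣ (Int.gcd a b : ℤ) := by exact_mod_cast Int.dvd_gcd hga hgb
    rw [hab1] at this
    exact_mod_cast Int.eq_one_of_dvd_one (by positivity) this
  · rintro ⟨hab, hg1⟩
    -- Bezout coefficients
    obtain ⟨u, v, huv⟩ := (Int.isCoprime_iff_gcd_eq_one.mpr hab)
    obtain ⟨p, q, hpq⟩ := (Int.isCoprime_iff_gcd_eq_one.mpr hg1)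
    have hld : (Int.gcd l D : ℤ) = l * Int.gcdA l D + D * Int.gcdB l D := Int.gcd_eq_gcd_ab l D
    set r : ℤ := Int.gcdA l D
    set s : ℤ := Int.gcdB l D
    have key : p * k + (q * r) * l + (q * s) * D = 1 := by
      have : p * k + q * (l * r + D * s) = 1 := by rw [← hld]; exact hpq
      linarith [this]
    -- generators in span
    have m1 : ((α, a) : ℤ × ℤ) ∈ Submodule.span ℤ S := Submodule.subset_span (by simp [hS])
    have m2 : ((β, b) : ℤ × ℤ) ∈ Submodule.span ℤ S := Submodule.subset_span (by simp [hS])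
    have m3 : ((k, 0) : ℤ × ℤ) ∈ Submodule.span ℤ S := Submodule.subset_span (by simp [hS])
    have m4 : ((l, 0) : ℤ × ℤ) ∈ Submodule.span ℤ S := Submodule.subset_span (by simp [hS])
    have mD : ((D, 0) : ℤ × ℤ) ∈ Submodule.span ℤ S := by
      have h' := Submodule.add_mem _ (Submodule.smul_mem _ a m2)
        (Submodule.smul_mem _ (-b) m1)
      have he : a • ((β, b) : ℤ × ℤ) + (-b) • ((α, a) : ℤ × ℤ) = (D, 0) := by
        simp [Prod.ext_iff, smul_eq_mul, hDdef]; constructor <;> ring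
      rwa [he] at h'
    have m10 : ((1, 0) : ℤ × ℤ) ∈ Submodule.span ℤ S := by
      have h' := Submodule.add_mem _ (Submodule.add_mem _
        (Submodule.smul_mem _ p m3) (Submodule.smul_mem _ (q * r) m4))
        (Submodule.smul_mem _ (q * s) mD)
      have he : p • ((k, 0) : ℤ × ℤ) + (q * r) • ((l, 0) : ℤ × ℤ) + (q * s) • ((D, 0) : ℤ × ℤ)
          = (1, 0) := by
        simp [Prod.ext_iff, smul_eq_mul]
        linarith [key]
      rwa [he] at h'
    have m01 : ((0, 1) : ℤ × ℤ) ∈ Submodule.span ℤ S := by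
      have h' := Submodule.add_mem _ (Submodule.add_mem _
        (Submodule.smul_mem _ u m1) (Submodule.smul_mem _ v m2))
        (Submodule.smul_mem _ (-(u * α + v * β)) m10)
      have he : u • ((α, a) : ℤ × ℤ) + v • ((β, b) : ℤ × ℤ)
          + (-(u * α + v * β)) • ((1, 0) : ℤ × ℤ) = (0, 1) := by
        simp [Prod.ext_iff, smul_eq_mul]
        linarith [huv]
      rwa [he] at h'
    rw [Submodule.eq_top_iff']
    rintro ⟨x, y⟩
    have h' := Submodule.add_mem _ (Submodule.smul_mem _ x m10) (Submodule.smul_mem _ y m01)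
    have he : x • ((1, 0) : ℤ × ℤ) + y • ((0, 1) : ℤ × ℤ) = (x, y) := by
      simp [Prod.ext_iff, smul_eq_mul]
    rwa [he] at h'
end

section
/- Let a, b, k, ℓ be positive integers with gcd(a, b) = 1. The number of pairs (α, β) of integers with 0 ≤ α < k, 0 ≤ β < ℓ, and gcd(k, ℓ, aβ − bα) = 1 equals k·ℓ·φ(gcd(k, ℓ))/gcd(k, ℓ). -/
open Finset

lemma countA (d m : ℕ) (hd : 0 < d) (hdvd : d ∣ m) (v : ℤ) (hv0 : 0 ≤ v) (hv : v < (d : ℤ)) :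
    ((Finset.Ico (0:ℤ) (m:ℤ)).filter (fun x => x ≡ v [ZMOD (d:ℤ)])).card = m / d := by
  have key := Int.Ico_filter_modEq_card 0 (m:ℤ) (r := (d:ℤ)) (by exact_mod_cast hd) v
  obtain ⟨m', rfl⟩ := hdvd
  have hdQ : (0:ℚ) < d := by exact_mod_cast hd
  have hv0Q : (0:ℚ) ≤ (v:ℚ) := by exact_mod_cast hv0
  have hvQ : (v:ℚ) < d := by exact_mod_cast hv
  push_cast at key
  have h1 : ⌈((d:ℚ) * (m':ℚ) - (v:ℚ)) / (d:ℚ)⌉ = (m' : ℤ) := by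
    rw [Int.ceil_eq_iff]
    constructor
    · push_cast
      rw [lt_div_iff₀ hdQ]
      nlinarith
    · push_cast
      rw [div_le_iff₀ hdQ]
      nlinarith
  have h2 : ⌈((0:ℚ) - (v:ℚ)) / (d:ℚ)⌉ = (0 : ℤ) := by
    rw [Int.ceil_eq_iff]
    constructor
    · push_cast
      rw [lt_div_iff₀ hdQ]
      nlinarith
    · push_cast
      apply div_nonpos_of_nonpos_of_nonneg <;> linarith
  rw [h1, h2] at key
  rw [Nat.mul_div_cancel_left _ hd]
  rw [sub_zero, max_eq_left (by positivity : (0:ℤ) ≤ (m' : ℤ))] at key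
  exact_mod_cast key

lemma countA' (d m : ℕ) [NeZero d] (hdvd : d ∣ m) (x : ZMod d) :
    ((Finset.Ico (0:ℤ) (m:ℤ)).filter (fun α : ℤ => (((α : ℤ) : ZMod d) = x))).card = m / d := by
  have hx : (((x.val : ℤ)) : ZMod d) = x := by
    push_cast
    exact ZMod.natCast_rightInverse x
  have : ∀ α : ℤ, ((α : ZMod d) = x) ↔ α ≡ (x.val : ℤ) [ZMOD (d:ℤ)] := by
    intro α
    rw [← ZMod.intCast_eq_intCast_iff, hx]
  rw [Finset.filter_congr (fun α _ => this α)]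
  exact countA d m (Nat.pos_of_ne_zero (NeZero.ne d)) hdvd _ (Int.natCast_nonneg _)
    (by exact_mod_cast x.val_lt)

lemma fiberB (d : ℕ) [NeZero d] (A B U V : ZMod d) (h1 : A * U + B * V = 1) (r : ZMod d) :
    ((Finset.univ : Finset (ZMod d × ZMod d)).filter
      (fun p => A * p.2 - B * p.1 = r)).card = d := by
  have hc : ((Finset.univ : Finset (ZMod d))).card = d := by rw [Finset.card_univ, ZMod.card]
  conv_rhs => rw [← hc]
  apply Finset.card_bij' (fun p _ => V * (p.2 - U * r) + U * (p.1 + V * r))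
    (fun t _ => (A * t - V * r, B * t + U * r))
  · intro p hp
    exact Finset.mem_univ _
  · intro t ht
    simp only [Finset.mem_filter, Finset.mem_univ, true_and]
    linear_combination r * h1
  · intro p hp
    simp only [Finset.mem_filter, Finset.mem_univ, true_and] at hp
    ext
    · simp only
      linear_combination V * hp + p.1 * h1
    · simp only
      linear_combination (-U) * hp + p.2 * h1
  · intro t ht
    simp only
    linear_combination t * h1

lemma unitsCard (d : ℕ) [NeZero d] :
    ((Finset.univ : Finset (ZMod d)).filter IsUnit).card = d.totient := by
  rw [← ZMod.card_units_eq_totient d, ← Finset.card_univ]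
  apply Finset.card_bij (fun (x : ZMod d) (hx : x ∈ Finset.univ.filter IsUnit) =>
    (Finset.mem_filter.mp hx).2.unit)
  · intro x hx; exact Finset.mem_univ _
  · intro x hx y hy h
    have := congrArg Units.val h
    simpa [IsUnit.unit_spec] using this
  · intro u _
    refine ⟨(u : ZMod d), Finset.mem_filter.mpr ⟨Finset.mem_univ _, u.isUnit⟩, ?_⟩
    ext
    simp

lemma isUnitInt (d : ℕ) [NeZero d] (X : ℤ) :
    IsUnit ((X : ZMod d)) ↔ Nat.gcd d X.natAbs = 1 := by
  have : Nat.gcd d X.natAbs = 1 ↔ Nat.Coprime X.natAbs d := by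
    rw [Nat.coprime_comm]
  rw [this, ← ZMod.isUnit_iff_coprime]
  have key : ((X.natAbs : ℕ) : ZMod d) = ((X : ZMod d)) ∨
      ((X.natAbs : ℕ) : ZMod d) = -((X : ZMod d)) := by
    rcases Int.natAbs_eq X with h | h
    · left
      conv_rhs => rw [h]
      exact (Int.cast_natCast _).symm
    · right
      conv_rhs => rw [h, Int.cast_neg, Int.cast_natCast, neg_neg]
  rcases key with h | h
  · rw [h]
  · rw [h]
    exact (IsUnit.neg_iff _).symm

/-- For positive integers `a,b,k,ℓ` with `gcd(a,b)=1`, the number of pairs `(α,β)` with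
`0 ≤ α < k`, `0 ≤ β < ℓ` and `gcd(k, ℓ, aβ − bα) = 1` is `kℓ·φ(gcd(k,ℓ))/gcd(k,ℓ)`. -/
theorem stmt_16 (a b k l : ℕ) (ha : 0 < a) (hb : 0 < b) (hk : 0 < k) (hl : 0 < l)
    (hab : Nat.gcd a b = 1) :
    (((Finset.Ico (0 : ℤ) (k : ℤ) ×ˢ Finset.Ico (0 : ℤ) (l : ℤ)).filter
      (fun p => Int.gcd (k : ℤ) (Int.gcd (l : ℤ) ((a : ℤ) * p.2 - (b : ℤ) * p.1)) = 1)).card : ℚ)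
      = (k : ℚ) * (l : ℚ) * ((Nat.gcd k l).totient : ℚ) / (Nat.gcd k l : ℚ) := by
  classical
  set d := Nat.gcd k l with hd_def
  have hd : 0 < d := Nat.gcd_pos_of_pos_left l hk
  haveI : NeZero d := ⟨hd.ne'⟩
  have hdk : d ∣ k := Nat.gcd_dvd_left k l
  have hdl : d ∣ l := Nat.gcd_dvd_right k l
  -- Bezout for a, b
  obtain ⟨u, v, huv⟩ : ∃ u v : ℤ, (a:ℤ) * u + (b:ℤ) * v = 1 := by
    refine ⟨Nat.gcdA a b, Nat.gcdB a b, ?_⟩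
    have := Nat.gcd_eq_gcd_ab a b
    rw [hab] at this
    exact_mod_cast this.symm
  have h1 : (a : ZMod d) * ((u : ℤ) : ZMod d) + (b : ZMod d) * ((v : ℤ) : ZMod d) = 1 := by
    have := congrArg (fun z : ℤ => (z : ZMod d)) huv
    push_cast at this
    exact this
  set S := Finset.Ico (0 : ℤ) (k : ℤ) ×ˢ Finset.Ico (0 : ℤ) (l : ℤ) with hS
  set F : ℤ × ℤ → ZMod d := fun p => (((a : ℤ) * p.2 - (b : ℤ) * p.1 : ℤ) : ZMod d) with hF
  -- rewrite the gcd condition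
  have step1 : (S.filter
      (fun p => Int.gcd (k : ℤ) (Int.gcd (l : ℤ) ((a : ℤ) * p.2 - (b : ℤ) * p.1)) = 1))
      = S.filter (fun p => IsUnit (F p)) := by
    apply Finset.filter_congr
    intro p _
    set X : ℤ := (a : ℤ) * p.2 - (b : ℤ) * p.1 with hX
    have e1 : Int.gcd (k : ℤ) ((Int.gcd (l : ℤ) X : ℕ) : ℤ) = Nat.gcd k (Int.gcd (l : ℤ) X) := by
      simp [Int.gcd]
    have e2 : Int.gcd (l : ℤ) X = Nat.gcd l X.natAbs := by
      simp [Int.gcd]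
    rw [e1, e2, ← Nat.gcd_assoc, ← hd_def]
    exact (isUnitInt d X).symm
  -- fiber over each residue r
  have step3 : ∀ r : ZMod d, (S.filter (fun p => F p = r)).card = d * (k / d * (l / d)) := by
    intro r
    have hmem : ∀ p ∈ S.filter (fun p => F p = r),
        (((p.1 : ZMod d), (p.2 : ZMod d)) : ZMod d × ZMod d) ∈
          (Finset.univ : Finset (ZMod d × ZMod d)).filter
            (fun q => (a : ZMod d) * q.2 - (b : ZMod d) * q.1 = r) := by
      intro p hp
      rw [Finset.mem_filter] at hp ⊢
      refine ⟨Finset.mem_univ _, ?_⟩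
      have : F p = (a : ZMod d) * (p.2 : ZMod d) - (b : ZMod d) * (p.1 : ZMod d) := by
        simp only [hF]
        push_cast
        ring
      rw [← this, hp.2]
    rw [Finset.card_eq_sum_card_fiberwise hmem]
    have heach : ∀ q ∈ (Finset.univ : Finset (ZMod d × ZMod d)).filter
        (fun q => (a : ZMod d) * q.2 - (b : ZMod d) * q.1 = r),
        ((S.filter (fun p => F p = r)).filter
          (fun p => (((p.1 : ZMod d), (p.2 : ZMod d)) : ZMod d × ZMod d) = q)).card
          = k / d * (l / d) := by
      intro q hq
      rw [Finset.mem_filter] at hq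
      rw [Finset.filter_filter]
      have : S.filter (fun p => F p = r ∧ (((p.1 : ZMod d), (p.2 : ZMod d)) : ZMod d × ZMod d) = q)
          = S.filter (fun p => ((p.1 : ZMod d) = q.1 ∧ (p.2 : ZMod d) = q.2)) := by
        apply Finset.filter_congr
        intro p _
        constructor
        · rintro ⟨-, h⟩
          rw [Prod.ext_iff] at h
          exact h
        · rintro ⟨h1', h2'⟩
          constructor
          · have : F p = (a : ZMod d) * (p.2 : ZMod d) - (b : ZMod d) * (p.1 : ZMod d) := by
              simp only [hF]; push_cast; ring
            rw [this, h1', h2', hq.2]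
          · exact Prod.ext h1' h2'
      rw [this, hS, Finset.filter_product (fun α : ℤ => (α : ZMod d) = q.1)
        (fun β : ℤ => (β : ZMod d) = q.2), Finset.card_product,
        countA' d k hdk, countA' d l hdl]
    rw [Finset.sum_congr rfl heach, Finset.sum_const, smul_eq_mul,
      fiberB d (a : ZMod d) (b : ZMod d) ((u:ℤ) : ZMod d) ((v:ℤ) : ZMod d) h1 r]
  -- sum over units
  have step2 : (S.filter (fun p => IsUnit (F p))).card = d.totient * (d * (k / d * (l / d))) := by
    have hmem : ∀ p ∈ S.filter (fun p => IsUnit (F p)),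
        F p ∈ (Finset.univ : Finset (ZMod d)).filter IsUnit := by
      intro p hp
      rw [Finset.mem_filter] at hp ⊢
      exact ⟨Finset.mem_univ _, hp.2⟩
    rw [Finset.card_eq_sum_card_fiberwise hmem]
    have heach : ∀ r ∈ (Finset.univ : Finset (ZMod d)).filter IsUnit,
        ((S.filter (fun p => IsUnit (F p))).filter (fun p => F p = r)).card
          = d * (k / d * (l / d)) := by
      intro r hr
      rw [Finset.mem_filter] at hr
      rw [Finset.filter_filter]
      have : S.filter (fun p => IsUnit (F p) ∧ F p = r) = S.filter (fun p => F p = r) := by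
        apply Finset.filter_congr
        intro p _
        constructor
        · exact fun h => h.2
        · exact fun h => ⟨h ▸ hr.2, h⟩
      rw [this, step3 r]
    rw [Finset.sum_congr rfl heach, Finset.sum_const, smul_eq_mul, unitsCard d]
  rw [step1, step2]
  -- final arithmetic
  obtain ⟨k', hk'⟩ := hdk
  obtain ⟨l', hl'⟩ := hdl
  rw [hk', hl', Nat.mul_div_cancel_left _ hd, Nat.mul_div_cancel_left _ hd]
  have hdQ : (d : ℚ) ≠ 0 := by exact_mod_cast hd.ne'
  push_cast
  field_simp
end

section
/- The number of pairs of permutations (s, t) in S_n × S_n such that the commutator [s,t] = s t s⁻¹ t⁻¹ is a 3-cycle and s is an n-cycle equals C(n,3)·n!. -/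
open Equiv Equiv.Perm Finset

open Fin.NatCast

open scoped Classical

namespace Stmt18

variable {n : ℕ}

lemma castInj [NeZero n] {x y : ℕ} (hx : x < n) (hy : y < n) :
    (x : Fin n) = (y : Fin n) ↔ x = y := by
  constructor
  · intro h
    have h2 := congrArg Fin.val h
    rwa [Fin.val_cast_of_lt hx, Fin.val_cast_of_lt hy] at h2
  · rintro rfl; rfl

/-- The 3-cycle `a → c → b → a`. -/
def tau (a b c : Fin n) : Perm (Fin n) := swap a b * swap a c

section TauEval

variable {a b c x : Fin n}

lemma tau_a (hac : a ≠ c) (hbc : b ≠ c) : tau a b c a = c := by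
  simp only [tau, Perm.mul_apply, swap_apply_left]
  exact swap_apply_of_ne_of_ne hac.symm hbc.symm

lemma tau_b (hab : a ≠ b) (hbc : b ≠ c) : tau a b c b = a := by
  simp only [tau, Perm.mul_apply, swap_apply_of_ne_of_ne hab.symm hbc, swap_apply_right]

lemma tau_c : tau a b c c = b := by
  simp only [tau, Perm.mul_apply, swap_apply_right, swap_apply_left]

lemma tau_other (h1 : x ≠ a) (h2 : x ≠ b) (h3 : x ≠ c) : tau a b c x = x := by
  simp only [tau, Perm.mul_apply, swap_apply_of_ne_of_ne h1 h3, swap_apply_of_ne_of_ne h1 h2]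

lemma tauInv_eq : (tau a b c)⁻¹ = swap a c * swap a b := by
  simp [tau, mul_inv_rev]

lemma tauInv_a (hab : a ≠ b) (hbc : b ≠ c) : (tau a b c)⁻¹ a = b := by
  rw [tauInv_eq]
  simp only [Perm.mul_apply, swap_apply_left]
  exact swap_apply_of_ne_of_ne hab.symm hbc

lemma tauInv_b (hab : a ≠ b) (hbc : b ≠ c) : (tau a b c)⁻¹ b = c := by
  rw [tauInv_eq]
  simp only [Perm.mul_apply, swap_apply_right, swap_apply_left]

lemma tauInv_c (hac : a ≠ c) (hbc : b ≠ c) : (tau a b c)⁻¹ c = a := by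
  rw [tauInv_eq]
  simp only [Perm.mul_apply, swap_apply_of_ne_of_ne hac.symm hbc.symm, swap_apply_right]

lemma tauInv_other (h1 : x ≠ a) (h2 : x ≠ b) (h3 : x ≠ c) : (tau a b c)⁻¹ x = x := by
  rw [tauInv_eq]
  simp only [Perm.mul_apply, swap_apply_of_ne_of_ne h1 h2, swap_apply_of_ne_of_ne h1 h3]

end TauEval

/-- Enumeration of the cycle of `tau⁻¹ * (·+1)` starting at `A`. -/
def gN (n A B C k : ℕ) : ℕ :=
  if k < B - A then A + k
  else if k < B - A + (n - C) then C + (k - (B - A))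
  else if k < B - A + (n - C) + A then k - (B - A) - (n - C)
  else B + (k - (B - A) - (n - C) - A)

lemma gN_lt {A B C : ℕ} (hAB : A < B) (hBC : B < C) (hCn : C < n) :
    ∀ k, k < n → gN n A B C k < n := by
  intro k hk; unfold gN; split_ifs <;> omega

lemma gN_surj {A B C : ℕ} (hAB : A < B) (hBC : B < C) (hCn : C < n) :
    ∀ y, y < n → ∃ k, k < n ∧ gN n A B C k = y := by
  intro y hy
  rcases (by omega : (A ≤ y ∧ y < B) ∨ C ≤ y ∨ y < A ∨ (B ≤ y ∧ y < C)) with h | h | h | h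
  · exact ⟨y - A, by omega, by unfold gN; split_ifs <;> omega⟩
  · exact ⟨(B - A) + (y - C), by omega, by unfold gN; split_ifs <;> omega⟩
  · exact ⟨(B - A) + (n - C) + y, by omega, by unfold gN; split_ifs <;> omega⟩
  · exact ⟨(B - A) + (n - C) + A + (y - B), by omega, by unfold gN; split_ifs <;> omega⟩

section Core

variable {A B C : ℕ} {ρ : Perm (Fin n)}

lemma step [NeZero n] (hn : 3 ≤ n) (hAB : A < B) (hBC : B < C) (hCn : C < n)
    (hρ : ∀ x, ρ x = x + 1) :
    ∀ k, k + 1 < n →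
      ((tau (A : Fin n) B C)⁻¹ * ρ) ((gN n A B C k : ℕ) : Fin n)
        = ((gN n A B C (k+1) : ℕ) : Fin n) := by
  have hab : (A : Fin n) ≠ B := by rw [Ne, castInj (by omega) (by omega)]; omega
  have hac : (A : Fin n) ≠ C := by rw [Ne, castInj (by omega) (by omega)]; omega
  have hbc : (B : Fin n) ≠ C := by rw [Ne, castInj (by omega) (by omega)]; omega
  intro k hk
  have key : ∀ v : ℕ, gN n A B C k = v →
      ((tau (A : Fin n) B C)⁻¹ * ρ) ((gN n A B C k : ℕ) : Fin n)
        = (tau (A : Fin n) B C)⁻¹ (((v + 1 : ℕ) : Fin n)) := by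
    intro v hv
    rw [hv, Perm.mul_apply, hρ]
    norm_cast
  rcases (by omega : (k + 1 < B - A) ∨ (k + 1 = B - A)
      ∨ (B - A ≤ k ∧ k + 1 < B - A + (n - C)) ∨ (k + 1 = B - A + (n - C))
      ∨ (B - A + (n - C) ≤ k ∧ k + 1 < B - A + (n - C) + A)
      ∨ (k + 1 = B - A + (n - C) + A ∧ 0 < A)
      ∨ (B - A + (n - C) + A ≤ k)) with h | h | h | h | h | h | h
  · -- middle of segment 1
    rw [key (A + k) (by unfold gN; split_ifs <;> omega)]
    have h2 : gN n A B C (k+1) = A + k + 1 := by unfold gN; split_ifs <;> omega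
    rw [h2, tauInv_other] <;> rw [Ne, castInj (by omega) (by omega)] <;> omega
  · -- end of segment 1 : jump b-1 → c
    rw [key (A + k) (by unfold gN; split_ifs <;> omega)]
    have h1 : A + k + 1 = B := by omega
    have h2 : gN n A B C (k+1) = C := by unfold gN; split_ifs <;> omega
    rw [h1, h2, tauInv_b hab hbc]
  · -- middle of segment 2
    rw [key (C + (k - (B - A))) (by unfold gN; split_ifs <;> omega)]
    have h2 : gN n A B C (k+1) = C + (k - (B - A)) + 1 := by unfold gN; split_ifs <;> omega
    rw [h2, tauInv_other] <;> rw [Ne, castInj (by omega) (by omega)] <;> omega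
  · -- end of segment 2 : wrap around n-1 → 0 (or → b if A = 0)
    rw [key (C + (k - (B - A))) (by unfold gN; split_ifs <;> omega)]
    have h1 : C + (k - (B - A)) + 1 = n := by omega
    rw [h1, Fin.natCast_self]
    rcases Nat.eq_zero_or_pos A with hA | hA
    · have h2 : gN n A B C (k+1) = B := by unfold gN; split_ifs <;> omega
      have h0 : (0 : Fin n) = (A : Fin n) := by rw [hA]; norm_cast
      rw [h2, h0, tauInv_a hab hbc]
    · have h2 : gN n A B C (k+1) = 0 := by unfold gN; split_ifs <;> omega
      have h0 : (0 : Fin n) = ((0 : ℕ) : Fin n) := by norm_cast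
      rw [h2, h0, tauInv_other] <;> rw [Ne, castInj (by omega) (by omega)] <;> omega
  · -- middle of segment 3
    rw [key (k - (B - A) - (n - C)) (by unfold gN; split_ifs <;> omega)]
    have h2 : gN n A B C (k+1) = k - (B - A) - (n - C) + 1 := by unfold gN; split_ifs <;> omega
    rw [h2, tauInv_other] <;> rw [Ne, castInj (by omega) (by omega)] <;> omega
  · -- end of segment 3 : jump a-1 → b
    rw [key (k - (B - A) - (n - C)) (by unfold gN; split_ifs <;> omega)]
    have h1 : k - (B - A) - (n - C) + 1 = A := by omega
    have h2 : gN n A B C (k+1) = B := by unfold gN; split_ifs <;> omega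
    rw [h1, h2, tauInv_a hab hbc]
  · -- segment 4 (middle); note k+1 < n so we never hit c-1 → a here
    rw [key (B + (k - (B - A) - (n - C) - A)) (by unfold gN; split_ifs <;> omega)]
    have h2 : gN n A B C (k+1) = B + (k - (B - A) - (n - C) - A) + 1 := by
      unfold gN; split_ifs <;> omega
    rw [h2, tauInv_other] <;> rw [Ne, castInj (by omega) (by omega)] <;> omega

lemma pow_formula [NeZero n] (hn : 3 ≤ n) (hAB : A < B) (hBC : B < C) (hCn : C < n)
    (hρ : ∀ x, ρ x = x + 1) :
    ∀ k, k < n → (((tau (A : Fin n) B C)⁻¹ * ρ) ^ k) ((A : Fin n))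
      = ((gN n A B C k : ℕ) : Fin n) := by
  intro k
  induction k with
  | zero =>
    intro _
    have h0 : gN n A B C 0 = A := by unfold gN; split_ifs <;> omega
    rw [h0, pow_zero, Perm.one_apply]
  | succ k ih =>
    intro hk
    rw [pow_succ', Perm.mul_apply, ih (by omega)]
    exact step hn hAB hBC hCn hρ k hk

lemma isCycle_good [NeZero n] (hn : 3 ≤ n) (hAB : A < B) (hBC : B < C) (hCn : C < n)
    (hρ : ∀ x, ρ x = x + 1) :
    ((tau (A : Fin n) B C)⁻¹ * ρ).IsCycle
      ∧ ((tau (A : Fin n) B C)⁻¹ * ρ).support.card = n := by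
  have hab : (A : Fin n) ≠ B := by rw [Ne, castInj (by omega) (by omega)]; omega
  have hac : (A : Fin n) ≠ C := by rw [Ne, castInj (by omega) (by omega)]; omega
  have hbc : (B : Fin n) ≠ C := by rw [Ne, castInj (by omega) (by omega)]; omega
  set p := (tau (A : Fin n) B C)⁻¹ * ρ with hp
  have apply_p : ∀ x, p x = (tau (A : Fin n) B C)⁻¹ (x + 1) := fun x => by
    rw [hp, Perm.mul_apply, hρ]
  have hfree : ∀ x : Fin n, p x ≠ x := by
    intro x hx
    rw [apply_p] at hx
    by_cases h1 : x + 1 = (A : Fin n)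
    · rw [h1, tauInv_a hab hbc] at hx
      rw [← hx] at h1
      have hB1 : ((B : Fin n) + 1) = ((B + 1 : ℕ) : Fin n) := by push_cast; ring
      rw [hB1] at h1
      rcases (by omega : B + 1 = n ∨ B + 1 < n) with h | h
      · rw [h, Fin.natCast_self] at h1
        have h0 : ((0 : ℕ) : Fin n) = (A : Fin n) := h1
        have := (castInj (by omega) (by omega)).mp h0; omega
      · have := (castInj h (by omega)).mp h1; omega
    · by_cases h2 : x + 1 = (B : Fin n)
      · rw [h2, tauInv_b hab hbc] at hx
        rw [← hx] at h2
        have hC1 : ((C : Fin n) + 1) = ((C + 1 : ℕ) : Fin n) := by push_cast; ring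
        rw [hC1] at h2
        rcases (by omega : C + 1 = n ∨ C + 1 < n) with h | h
        · rw [h, Fin.natCast_self] at h2
          have h0 : ((0 : ℕ) : Fin n) = (B : Fin n) := h2
          have := (castInj (by omega) (by omega)).mp h0; omega
        · have := (castInj h (by omega)).mp h2; omega
      · by_cases h3 : x + 1 = (C : Fin n)
        · rw [h3, tauInv_c hac hbc] at hx
          rw [← hx] at h3
          have hA1 : ((A : Fin n) + 1) = ((A + 1 : ℕ) : Fin n) := by push_cast; ring
          rw [hA1] at h3
          have := (castInj (by omega) (by omega)).mp h3; omega
        · rw [tauInv_other h1 h2 h3] at hx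
          have h10 : (1 : Fin n) = 0 := by
            have hx0 : x + 1 = x + 0 := by rw [add_zero]; exact hx
            exact add_left_cancel hx0
          have h10' : ((1 : ℕ) : Fin n) = ((0 : ℕ) : Fin n) := by push_cast; exact h10
          have := (castInj (by omega) (by omega)).mp h10'; omega
  have hcard : p.support.card = n := by
    have hsupp : p.support = univ := Finset.eq_univ_iff_forall.mpr fun x =>
      mem_support.mpr (hfree x)
    rw [hsupp, card_univ, Fintype.card_fin]
  refine ⟨⟨(A : Fin n), hfree _, fun y _ => ?_⟩, hcard⟩
  obtain ⟨k, hk, hgk⟩ := gN_surj hAB hBC hCn y.val y.isLt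
  exact ⟨(k : ℤ), by
    rw [zpow_natCast, pow_formula hn hAB hBC hCn hρ k hk, hgk, Fin.cast_val_eq_self]⟩

lemma bad_notCycle [NeZero n] (hn : 3 ≤ n) (hAB : A < B) (hBC : B < C) (hCn : C < n)
    (hρ : ∀ x, ρ x = x + 1) (hcyc : ((tau (A : Fin n) B C) * ρ).IsCycle)
    (hcard : ((tau (A : Fin n) B C) * ρ).support.card = n) : False := by
  have hab : (A : Fin n) ≠ B := by rw [Ne, castInj (by omega) (by omega)]; omega
  have hac : (A : Fin n) ≠ C := by rw [Ne, castInj (by omega) (by omega)]; omega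
  have hbc : (B : Fin n) ≠ C := by rw [Ne, castInj (by omega) (by omega)]; omega
  set q := tau (A : Fin n) B C * ρ with hq
  have apply_q : ∀ x, q x = tau (A : Fin n) B C (x + 1) := fun x => by
    rw [hq, Perm.mul_apply, hρ]
  have seg : ∀ k, k < B - A → (q ^ k) (A : Fin n) = ((A + k : ℕ) : Fin n) := by
    intro k
    induction k with
    | zero => intro _; rw [pow_zero, Perm.one_apply]; norm_num
    | succ k ih =>
      intro hk
      rw [pow_succ', Perm.mul_apply, ih (by omega), apply_q]
      have hcast : ((A + k : ℕ) : Fin n) + 1 = ((A + (k + 1) : ℕ) : Fin n) := by push_cast; rw [add_assoc]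
      rw [hcast, tau_other] <;> rw [Ne, castInj (by omega) (by omega)] <;> omega
  have hshort : (q ^ (B - A)) (A : Fin n) = (A : Fin n) := by
    obtain ⟨d, hd⟩ : ∃ d, B - A = d + 1 := ⟨B - A - 1, by omega⟩
    rw [hd, pow_succ', Perm.mul_apply, seg d (by omega), apply_q]
    have hcast : ((A + d : ℕ) : Fin n) + 1 = ((B : ℕ) : Fin n) := by
      have : A + d + 1 = B := by omega
      push_cast [← this]; ring
    rw [hcast, tau_b hab hbc]
  have hsupp : q.support = univ := Finset.eq_univ_of_card _ (by rw [hcard, Fintype.card_fin])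
  have hA : q (A : Fin n) ≠ (A : Fin n) := mem_support.mp (hsupp ▸ mem_univ _)
  have hone : q ^ (B - A) = 1 := (hcyc.pow_eq_one_iff' hA).mpr hshort
  have hdvd : orderOf q ∣ B - A := orderOf_dvd_of_pow_eq_one hone
  rw [hcyc.orderOf, hcard] at hdvd
  have := Nat.le_of_dvd (by omega) hdvd
  omega

end Core
section Classify

lemma threeCycle_cases {γ : Perm (Fin n)} {x y z : Fin n} (hxy : x ≠ y) (hxz : x ≠ z)
    (hyz : y ≠ z) (hsupp : γ.support = {x, y, z}) :
    γ = tau x y z ∨ γ = (tau x y z)⁻¹ := by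
  have hx : x ∈ γ.support := by rw [hsupp]; simp
  have hy : y ∈ γ.support := by rw [hsupp]; simp
  have hz : z ∈ γ.support := by rw [hsupp]; simp
  have hmem : ∀ w, w ∈ γ.support → γ w = x ∨ γ w = y ∨ γ w = z := by
    intro w hw
    have := apply_mem_support.mpr hw
    rw [hsupp] at this
    simpa using this
  have hout : ∀ w, w ≠ x → w ≠ y → w ≠ z → γ w = w := by
    intro w h1 h2 h3
    apply notMem_support.mp
    rw [hsupp]; simp [h1, h2, h3]
  have hnx : γ x ≠ x := mem_support.mp hx
  have hny : γ y ≠ y := mem_support.mp hy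
  have hnz : γ z ≠ z := mem_support.mp hz
  rcases hmem x hx with h | h | h
  · exact absurd h hnx
  · -- γ x = y : γ = tau⁻¹ (x → y → z → x)
    right
    have hgy : γ y = z := by
      rcases hmem y hy with h' | h' | h'
      · exfalso
        rcases hmem z hz with h'' | h'' | h''
        · exact hyz (γ.injective (h'.trans h''.symm))
        · exact hxz (γ.injective (h.trans h''.symm))
        · exact hnz h''
      · exact absurd h' hny
      · exact h'
    have hgz : γ z = x := by
      rcases hmem z hz with h' | h' | h'
      · exact h'
      · exact hxz (γ.injective (h.trans h'.symm)) |>.elim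
      · exact absurd h' hnz
    apply Equiv.ext
    intro w
    by_cases h1 : w = x
    · rw [h1, h, tauInv_a hxy hyz]
    by_cases h2 : w = y
    · rw [h2, hgy, tauInv_b hxy hyz]
    by_cases h3 : w = z
    · rw [h3, hgz, tauInv_c hxz hyz]
    · rw [hout w h1 h2 h3, tauInv_other h1 h2 h3]
  · -- γ x = z : γ = tau (x → z → y → x)
    left
    have hgz : γ z = y := by
      rcases hmem z hz with h' | h' | h'
      · exfalso
        rcases hmem y hy with h'' | h'' | h''
        · exact hyz (γ.injective (h''.trans h'.symm))
        · exact hny h''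
        · exact hxy (γ.injective (h.trans h''.symm))
      · exact h'
      · exact absurd h' hnz
    have hgy : γ y = x := by
      rcases hmem y hy with h' | h' | h'
      · exact h'
      · exact absurd h' hny
      · exact hxy (γ.injective (h.trans h'.symm)) |>.elim
    apply Equiv.ext
    intro w
    by_cases h1 : w = x
    · rw [h1, h, tau_a hxz hyz]
    by_cases h2 : w = y
    · rw [h2, hgy, tau_b hxy hyz]
    by_cases h3 : w = z
    · rw [h3, hgz, tau_c]
    · rw [hout w h1 h2 h3, tau_other h1 h2 h3]

end Classify
lemma exists_sorted [NeZero n] {S : Finset (Fin n)} (hS : S.card = 3) :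
    ∃ A B C : ℕ, A < B ∧ B < C ∧ C < n ∧ S = {(A : Fin n), (B : Fin n), (C : Fin n)} := by
  let f := S.orderIsoOfFin hS
  refine ⟨(f 0 : Fin n).val, (f 1 : Fin n).val, (f 2 : Fin n).val, ?_, ?_, (f 2 : Fin n).isLt, ?_⟩
  · exact (f.lt_iff_lt.mpr (by decide) : (f 0 : S) < f 1)
  · exact (f.lt_iff_lt.mpr (by decide) : (f 1 : S) < f 2)
  · simp only [Fin.cast_val_eq_self]
    apply Finset.Subset.antisymm
    · intro w hw
      set i := f.symm ⟨w, hw⟩ with hi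
      have hfi : (f i : Fin n) = w := by rw [hi, f.apply_symm_apply]
      have : i = 0 ∨ i = 1 ∨ i = 2 := by omega
      rcases this with h | h | h <;> rw [h] at hfi <;> simp [← hfi]
    · intro w hw
      simp only [Finset.mem_insert, Finset.mem_singleton] at hw
      rcases hw with rfl | rfl | rfl <;> exact (f _).2

lemma isThreeCycle_conj {g γ : Perm (Fin n)} (h : γ.IsThreeCycle) :
    (g * γ * g⁻¹).IsThreeCycle := by
  unfold Equiv.Perm.IsThreeCycle at *
  rw [cycleType_conj]
  exact h

lemma support_tau {a b c : Fin n} (hab : a ≠ b) (hac : a ≠ c) (hbc : b ≠ c) :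
    (tau a b c).support = {a, b, c} := by
  have h1 : tau a b c = swap b a * swap a c := by rw [tau, swap_comm]
  rw [h1, support_swap_mul_swap (by simp [hab.symm, hac, hbc]), Finset.insert_comm]

lemma countGood_std [NeZero n] (hn : 3 ≤ n) {ρ : Perm (Fin n)} (hρ : ∀ x, ρ x = x + 1) :
    (univ.filter (fun γ : Perm (Fin n) =>
      γ.IsThreeCycle ∧ (γ⁻¹ * ρ).IsCycle ∧ (γ⁻¹ * ρ).support.card = n)).card = n.choose 3 := by
  have uniq : ∀ γ : Perm (Fin n), (γ⁻¹ * ρ).IsCycle → (γ⁻¹ * ρ).support.card = n →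
      ∀ A B C : ℕ, A < B → B < C → C < n → γ.support = {(A : Fin n), (B : Fin n), (C : Fin n)} →
      γ = tau (A : Fin n) (B : Fin n) (C : Fin n) := by
    intro γ hcyc hcard A B C hAB hBC hCn hsupp
    have hab : (A : Fin n) ≠ B := by rw [Ne, castInj (by omega) (by omega)]; omega
    have hac : (A : Fin n) ≠ C := by rw [Ne, castInj (by omega) (by omega)]; omega
    have hbc : (B : Fin n) ≠ C := by rw [Ne, castInj (by omega) (by omega)]; omega
    rcases threeCycle_cases hab hac hbc hsupp with h | h
    · exact h
    · exfalso
      rw [h, inv_inv] at hcyc hcard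
      exact bad_notCycle hn hAB hBC hCn hρ hcyc hcard
  have hgoal : (powersetCard 3 (univ : Finset (Fin n))).card = n.choose 3 := by
    rw [card_powersetCard, card_univ, Fintype.card_fin]
  rw [← hgoal]
  apply Finset.card_bij (fun γ _ => γ.support)
  · intro γ hγ
    simp only [mem_filter, mem_univ, true_and] at hγ
    exact mem_powersetCard_univ.mpr hγ.1.card_support
  · intro γ₁ h₁ γ₂ h₂ hsup
    simp only [mem_filter, mem_univ, true_and] at h₁ h₂
    obtain ⟨A, B, C, hAB, hBC, hCn, hS⟩ := exists_sorted h₁.1.card_support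
    rw [uniq γ₁ h₁.2.1 h₁.2.2 A B C hAB hBC hCn hS,
        uniq γ₂ h₂.2.1 h₂.2.2 A B C hAB hBC hCn (hsup ▸ hS)]
  · intro S hS
    rw [mem_powersetCard_univ] at hS
    obtain ⟨A, B, C, hAB, hBC, hCn, rfl⟩ := exists_sorted hS
    have hab : (A : Fin n) ≠ B := by rw [Ne, castInj (by omega) (by omega)]; omega
    have hac : (A : Fin n) ≠ C := by rw [Ne, castInj (by omega) (by omega)]; omega
    have hbc : (B : Fin n) ≠ C := by rw [Ne, castInj (by omega) (by omega)]; omega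
    refine ⟨tau (A : Fin n) (B : Fin n) (C : Fin n), ?_, support_tau hab hac hbc⟩
    simp only [mem_filter, mem_univ, true_and]
    exact ⟨isThreeCycle_swap_mul_swap_same hab hac hbc,
      (isCycle_good hn hAB hBC hCn hρ).1, (isCycle_good hn hAB hBC hCn hρ).2⟩
lemma countGood (hn : 3 ≤ n) {s : Perm (Fin n)} (hs : s.IsCycle) (hcard : s.support.card = n) :
    (univ.filter (fun γ : Perm (Fin n) =>
      γ.IsThreeCycle ∧ (γ⁻¹ * s).IsCycle ∧ (γ⁻¹ * s).support.card = n)).card = n.choose 3 := by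
  haveI : NeZero n := ⟨by omega⟩
  obtain ⟨k, rfl⟩ : ∃ k, n = k + 2 := ⟨n - 2, by omega⟩
  have hρ : ∀ x : Fin (k + 2), finRotate (k + 2) x = x + 1 := finRotate_succ_apply
  have hr : (finRotate (k + 2)).IsCycle := isCycle_finRotate
  have hrcard : (finRotate (k + 2)).support.card = k + 2 := by
    rw [support_finRotate, card_univ, Fintype.card_fin]
  obtain ⟨g, hg⟩ := isConj_iff.mp (hr.isConj hs (by rw [hrcard, hcard]))
  have transport :
      (univ.filter (fun γ : Perm (Fin (k + 2)) =>
        γ.IsThreeCycle ∧ (γ⁻¹ * finRotate (k + 2)).IsCycle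
          ∧ (γ⁻¹ * finRotate (k + 2)).support.card = k + 2)).card
      = (univ.filter (fun γ : Perm (Fin (k + 2)) =>
        γ.IsThreeCycle ∧ (γ⁻¹ * s).IsCycle ∧ (γ⁻¹ * s).support.card = k + 2)).card := by
    apply Finset.card_bij (fun γ _ => g * γ * g⁻¹)
    · intro γ hγ
      simp only [mem_filter, mem_univ, true_and] at hγ ⊢
      have hkey : (g * γ * g⁻¹)⁻¹ * s = g * (γ⁻¹ * finRotate (k + 2)) * g⁻¹ := by
        rw [← hg]; group
      exact ⟨isThreeCycle_conj hγ.1, by rw [hkey]; exact hγ.2.1.conj,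
        by rw [hkey, card_support_conj]; exact hγ.2.2⟩
    · intro γ₁ _ γ₂ _ h
      exact mul_left_cancel (mul_right_cancel h)
    · intro δ hδ
      simp only [mem_filter, mem_univ, true_and] at hδ
      refine ⟨g⁻¹ * δ * g, ?_, by group⟩
      simp only [mem_filter, mem_univ, true_and]
      have hkey : (g⁻¹ * δ * g)⁻¹ * finRotate (k + 2) = g⁻¹ * (δ⁻¹ * s) * (g⁻¹)⁻¹ := by
        rw [← hg]; group
      have h3 : (g⁻¹ * δ * (g⁻¹)⁻¹).IsThreeCycle := isThreeCycle_conj hδ.1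
      rw [inv_inv] at h3
      exact ⟨h3, by rw [hkey]; exact hδ.2.1.conj,
        by rw [hkey, card_support_conj]; exact hδ.2.2⟩
  rw [← transport]
  exact countGood_std hn hρ

lemma card_conjFiber {s u : Perm (Fin n)} (h : IsConj s u) :
    (univ.filter fun t : Perm (Fin n) => t * s * t⁻¹ = u).card
      = (univ.filter fun t : Perm (Fin n) => t * s * t⁻¹ = s).card := by
  obtain ⟨g, hg⟩ := isConj_iff.mp h
  symm
  apply Finset.card_bij (fun t _ => g * t)
  · intro t ht
    simp only [mem_filter, mem_univ, true_and] at ht ⊢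
    have hkey : g * t * s * (g * t)⁻¹ = g * (t * s * t⁻¹) * g⁻¹ := by group
    rw [hkey, ht, hg]
  · intro a _ b _ hab
    exact mul_left_cancel hab
  · intro t' ht'
    simp only [mem_filter, mem_univ, true_and] at ht'
    refine ⟨g⁻¹ * t', ?_, by group⟩
    simp only [mem_filter, mem_univ, true_and]
    have hkey : g⁻¹ * t' * s * (g⁻¹ * t')⁻¹ = g⁻¹ * (t' * s * t'⁻¹) * g := by group
    rw [hkey, ht', ← hg]
    group

lemma card_centralizer_conj {r s : Perm (Fin n)} (h : IsConj r s) :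
    (univ.filter fun t : Perm (Fin n) => t * r * t⁻¹ = r).card
      = (univ.filter fun t : Perm (Fin n) => t * s * t⁻¹ = s).card := by
  obtain ⟨g, hg⟩ := isConj_iff.mp h
  apply Finset.card_bij (fun t _ => g * t * g⁻¹)
  · intro t ht
    simp only [mem_filter, mem_univ, true_and] at ht ⊢
    have hkey : g * t * g⁻¹ * s * (g * t * g⁻¹)⁻¹ = g * (t * (g⁻¹ * s * g) * t⁻¹) * g⁻¹ := by
      group
    have hs' : g⁻¹ * s * g = r := by rw [← hg]; group
    rw [hkey, hs', ht, hg]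
  · intro a _ b _ hab
    exact mul_left_cancel (mul_right_cancel hab)
  · intro t' ht'
    simp only [mem_filter, mem_univ, true_and] at ht'
    refine ⟨g⁻¹ * t' * g, ?_, by group⟩
    simp only [mem_filter, mem_univ, true_and]
    have hkey : g⁻¹ * t' * g * r * (g⁻¹ * t' * g)⁻¹ = g⁻¹ * (t' * (g * r * g⁻¹) * t'⁻¹) * g := by
      group
    rw [hkey, hg, ht', ← hg]
    group

lemma fiber_count (hn : 3 ≤ n) {s : Perm (Fin n)} (hs : s.IsCycle) (hcard : s.support.card = n) :
    (univ.filter fun t : Perm (Fin n) => (s * t * s⁻¹ * t⁻¹).IsThreeCycle).card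
      = n.choose 3 * (univ.filter fun t : Perm (Fin n) => t * s * t⁻¹ = s).card := by
  have hcomm : ∀ t : Perm (Fin n), s * t * s⁻¹ * t⁻¹ = s * (t * s * t⁻¹)⁻¹ := by
    intro t; group
  set U : Finset (Perm (Fin n)) := univ.filter
    (fun u => (u.IsCycle ∧ u.support.card = n) ∧ (s * u⁻¹).IsThreeCycle) with hU
  have hmap : ∀ t ∈ (univ.filter fun t : Perm (Fin n) => (s * t * s⁻¹ * t⁻¹).IsThreeCycle),
      t * s * t⁻¹ ∈ U := by
    intro t ht
    simp only [mem_filter, mem_univ, true_and, hU] at ht ⊢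
    exact ⟨⟨hs.conj, by rw [card_support_conj]; exact hcard⟩, by rw [← hcomm]; exact ht⟩
  rw [Finset.card_eq_sum_card_fiberwise hmap]
  have hfib : ∀ u ∈ U, ((univ.filter fun t : Perm (Fin n) =>
      (s * t * s⁻¹ * t⁻¹).IsThreeCycle).filter (fun t => t * s * t⁻¹ = u)).card
      = (univ.filter fun t : Perm (Fin n) => t * s * t⁻¹ = s).card := by
    intro u hu
    simp only [hU, mem_filter, mem_univ, true_and] at hu
    have heq : (univ.filter fun t : Perm (Fin n) =>
        (s * t * s⁻¹ * t⁻¹).IsThreeCycle).filter (fun t => t * s * t⁻¹ = u)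
        = univ.filter fun t : Perm (Fin n) => t * s * t⁻¹ = u := by
      ext t
      simp only [mem_filter, mem_univ, true_and]
      exact ⟨fun h => h.2, fun h => ⟨by rw [hcomm, h]; exact hu.2, h⟩⟩
    rw [heq]
    exact card_conjFiber (hs.isConj hu.1.1 (by rw [hcard, hu.1.2]))
  rw [Finset.sum_congr rfl hfib, Finset.sum_const, smul_eq_mul]
  congr 1
  rw [← countGood hn hs hcard]
  apply Finset.card_bij (fun u _ => s * u⁻¹)
  · intro u hu
    simp only [hU, mem_filter, mem_univ, true_and] at hu ⊢
    have h1 : (s * u⁻¹)⁻¹ * s = u := by group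
    exact ⟨hu.2, by rw [h1]; exact hu.1.1, by rw [h1]; exact hu.1.2⟩
  · intro a _ b _ hab
    exact inv_injective (mul_left_cancel hab)
  · intro γ hγ
    simp only [mem_filter, mem_univ, true_and] at hγ
    refine ⟨γ⁻¹ * s, ?_, by group⟩
    simp only [hU, mem_filter, mem_univ, true_and]
    have h1 : s * (γ⁻¹ * s)⁻¹ = γ := by group
    exact ⟨⟨hγ.2.1, hγ.2.2⟩, by rw [h1]; exact hγ.1⟩

lemma group_count {r : Perm (Fin n)} (hr : r.IsCycle) (hrcard : r.support.card = n) :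
    (univ.filter (fun s : Perm (Fin n) => s.IsCycle ∧ s.support.card = n)).card
      * (univ.filter fun t : Perm (Fin n) => t * r * t⁻¹ = r).card = n.factorial := by
  have hmap : ∀ t ∈ (univ : Finset (Perm (Fin n))),
      t * r * t⁻¹ ∈ univ.filter (fun s : Perm (Fin n) => s.IsCycle ∧ s.support.card = n) := by
    intro t _
    simp only [mem_filter, mem_univ, true_and]
    exact ⟨hr.conj, by rw [card_support_conj]; exact hrcard⟩
  have h1 := Finset.card_eq_sum_card_fiberwise hmap
  rw [card_univ, Fintype.card_perm, Fintype.card_fin] at h1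
  have h2 : ∀ u ∈ univ.filter (fun s : Perm (Fin n) => s.IsCycle ∧ s.support.card = n),
      ((univ : Finset (Perm (Fin n))).filter (fun t => t * r * t⁻¹ = u)).card
        = (univ.filter fun t : Perm (Fin n) => t * r * t⁻¹ = r).card := by
    intro u hu
    simp only [mem_filter, mem_univ, true_and] at hu
    exact card_conjFiber (hr.isConj hu.1 (by rw [hrcard, hu.2]))
  rw [h1, Finset.sum_congr rfl h2, Finset.sum_const, smul_eq_mul]
end Stmt18

/-- The number of pairs `(s,t) ∈ Sₙ × Sₙ` whose commutator is a 3-cycle and with `s` an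
`n`-cycle equals `C(n,3)·n!`. -/
theorem stmt_18 (n : ℕ) :
    Nat.card {p : Equiv.Perm (Fin n) × Equiv.Perm (Fin n) //
      (p.1 * p.2 * p.1⁻¹ * p.2⁻¹).IsThreeCycle ∧ p.1.IsCycle ∧ p.1.support.card = n}
      = n.choose 3 * n.factorial := by
  open Stmt18 in
  rcases lt_or_ge n 3 with hn | hn
  · -- degenerate case: no 3-cycles exist in `Perm (Fin n)` for `n < 3`
    have hempty : IsEmpty {p : Equiv.Perm (Fin n) × Equiv.Perm (Fin n) //
        (p.1 * p.2 * p.1⁻¹ * p.2⁻¹).IsThreeCycle ∧ p.1.IsCycle ∧ p.1.support.card = n} := by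
      constructor
      rintro ⟨p, hp, -⟩
      have h3 := hp.card_support
      have hle := Finset.card_le_univ (p.1 * p.2 * p.1⁻¹ * p.2⁻¹).support
      rw [h3, Fintype.card_fin] at hle
      omega
    rw [Nat.card_of_isEmpty, Nat.choose_eq_zero_of_lt hn, Nat.zero_mul]
  · haveI : NeZero n := ⟨by omega⟩
    rw [Nat.card_eq_fintype_card, Fintype.card_subtype]
    obtain ⟨k, rfl⟩ : ∃ k, n = k + 2 := ⟨n - 2, by omega⟩
    set n := k + 2
    have hr : (finRotate n).IsCycle := isCycle_finRotate
    have hrcard : (finRotate n).support.card = n := by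
      rw [support_finRotate, Finset.card_univ, Fintype.card_fin]
    have hmapfst : ∀ p ∈ Finset.univ.filter (fun p : Equiv.Perm (Fin n) × Equiv.Perm (Fin n) =>
        (p.1 * p.2 * p.1⁻¹ * p.2⁻¹).IsThreeCycle ∧ p.1.IsCycle ∧ p.1.support.card = n),
        p.1 ∈ Finset.univ.filter (fun s : Equiv.Perm (Fin n) => s.IsCycle ∧ s.support.card = n) := by
      intro p hp
      simp only [Finset.mem_filter, Finset.mem_univ, true_and] at hp ⊢
      exact ⟨hp.2.1, hp.2.2⟩
    rw [Finset.card_eq_sum_card_fiberwise hmapfst]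
    have hfib : ∀ s ∈ Finset.univ.filter
        (fun s : Equiv.Perm (Fin n) => s.IsCycle ∧ s.support.card = n),
        ((Finset.univ.filter (fun p : Equiv.Perm (Fin n) × Equiv.Perm (Fin n) =>
          (p.1 * p.2 * p.1⁻¹ * p.2⁻¹).IsThreeCycle ∧ p.1.IsCycle ∧ p.1.support.card = n)).filter
            (fun p => p.1 = s)).card
        = n.choose 3 * (Finset.univ.filter
            (fun t : Equiv.Perm (Fin n) => t * finRotate n * t⁻¹ = finRotate n)).card := by
      intro s hs
      simp only [Finset.mem_filter, Finset.mem_univ, true_and] at hs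
      have e1 : ((Finset.univ.filter (fun p : Equiv.Perm (Fin n) × Equiv.Perm (Fin n) =>
          (p.1 * p.2 * p.1⁻¹ * p.2⁻¹).IsThreeCycle ∧ p.1.IsCycle ∧ p.1.support.card = n)).filter
            (fun p => p.1 = s)).card
          = (Finset.univ.filter (fun t : Equiv.Perm (Fin n) =>
              (s * t * s⁻¹ * t⁻¹).IsThreeCycle)).card := by
        apply Finset.card_bij (fun p _ => p.2)
        · intro p hp
          simp only [Finset.mem_filter, Finset.mem_univ, true_and] at hp ⊢
          obtain ⟨⟨h1, -⟩, h2⟩ := hp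
          rw [← h2]
          exact h1
        · intro p hp q hq hpq
          simp only [Finset.mem_filter] at hp hq
          exact Prod.ext (hp.2.trans hq.2.symm) hpq
        · intro t ht
          simp only [Finset.mem_filter, Finset.mem_univ, true_and] at ht
          exact ⟨(s, t), Finset.mem_filter.mpr
            ⟨Finset.mem_filter.mpr ⟨Finset.mem_univ _, ht, hs.1, hs.2⟩, rfl⟩, rfl⟩
      rw [e1, fiber_count hn hs.1 hs.2]
      congr 1
      exact (card_centralizer_conj (hr.isConj hs.1 (by rw [hrcard, hs.2]))).symm
    rw [Finset.sum_congr rfl hfib, Finset.sum_const, smul_eq_mul, mul_left_comm,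
      group_count hr hrcard]
end
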